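/- arXiv:2107.01551 — 3 statements merged into one kernel-verified Lean document; each statement's English description precedes it below -/
import Mathlib

section
/- Suppose b > Nμχ/4. Let u, v : ℝ^N × (0,∞) → ℝ be a classical solution of (KS) on ℝ^N × (0,∞) (i.e. u is C¹ in t and C² in x, both equations hold pointwise) such that in addition v is three times continuously differentiable in x, ∇v is continuously differentiable in t, and ∂_t ∇v = ∇ ∂_t v on ℝ^N × (0,∞). Set w(x,t) = u(x,t) + (χ/(2μ)) |∇v(x,t)|². Then ∂_t w(x,t) ≤ Δw(x,t) + a w(x,t) for all x ∈ ℝ^N and t > 0. -/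
open Real Filter MeasureTheory RealInnerProductSpace

noncomputable section

/-- Euclidean space `ℝ^N`. -/
abbrev Eu (N : ℕ) := EuclideanSpace ℝ (Fin N)

/-- First-order partial derivative in the `i`-th coordinate direction. -/
def pd {N : ℕ} (f : Eu N → ℝ) (i : Fin N) (x : Eu N) : ℝ :=
  fderiv ℝ f x (EuclideanSpace.single i 1)

/-- Second-order partial derivative `∂_{x_i x_j}`. -/
def pd2 {N : ℕ} (f : Eu N → ℝ) (i j : Fin N) (x : Eu N) : ℝ :=
  pd (fun y => pd f j y) i x

/-- Laplacian `Δf = Σ_i ∂²f/∂x_i²`. -/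
def lap {N : ℕ} (f : Eu N → ℝ) (x : Eu N) : ℝ := ∑ i, pd2 f i i x

/-- Divergence `∇·F = Σ_i ∂F_i/∂x_i` of a vector field. -/
def divg {N : ℕ} (F : Eu N → Eu N) (x : Eu N) : ℝ :=
  ∑ i, fderiv ℝ (fun y => F y i) x (EuclideanSpace.single i 1)

/-- `(u,v)` is a global classical solution of (KS) with initial data `(u₀,v₀)`:
continuous on `ℝ^N × [0,∞)`, once continuously differentiable in `t` and twice in `x`
for `t > 0`, satisfying both equations pointwise for `t > 0`. -/
structure IsClassicalSolution {N : ℕ} (χ a b lam mu : ℝ)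
    (u v : Eu N → ℝ → ℝ) (u₀ v₀ : Eu N → ℝ) : Prop where
  contu : ContinuousOn (fun p : Eu N × ℝ => u p.1 p.2) {p : Eu N × ℝ | 0 ≤ p.2}
  contv : ContinuousOn (fun p : Eu N × ℝ => v p.1 p.2) {p : Eu N × ℝ | 0 ≤ p.2}
  regu : ∀ t : ℝ, 0 < t → ContDiff ℝ 2 (fun x => u x t)
  regv : ∀ t : ℝ, 0 < t → ContDiff ℝ 2 (fun x => v x t)
  pdeu : ∀ (x : Eu N) (t : ℝ), 0 < t →
    HasDerivAt (fun s => u x s)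
      (lap (fun y => u y t) x
        - χ * divg (fun y => u y t • gradient (fun z => v z t) y) x
        + u x t * (a - b * u x t)) t
  pdev : ∀ (x : Eu N) (t : ℝ), 0 < t →
    HasDerivAt (fun s => v x s)
      (lap (fun y => v y t) x - lam * v x t + mu * u x t) t
  initu : ∀ x, u x 0 = u₀ x
  initv : ∀ x, v x 0 = v₀ x

/-- A solution is bounded on `ℝ^N × [0,∞)`. -/
def BoundedSol {N : ℕ} (u v : Eu N → ℝ → ℝ) : Prop :=
  ∃ C : ℝ, ∀ (x : Eu N) (t : ℝ), 0 ≤ t → |u x t| ≤ C ∧ |v x t| ≤ C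

/-- A solution is nonnegative. -/
def NonnegSol {N : ℕ} (u v : Eu N → ℝ → ℝ) : Prop :=
  ∀ (x : Eu N) (t : ℝ), 0 ≤ t → 0 ≤ u x t ∧ 0 ≤ v x t

/-- Membership in `X₁⁺`: bounded, uniformly continuous and nonnegative. -/
def MemX1plus {N : ℕ} (f : Eu N → ℝ) : Prop :=
  UniformContinuous f ∧ (∃ C, ∀ x, |f x| ≤ C) ∧ ∀ x, 0 ≤ f x

/-- Membership in `X₂⁺`: in `X₁⁺`, differentiable, and all first-order partial
derivatives are bounded and uniformly continuous. -/
def MemX2plus {N : ℕ} (f : Eu N → ℝ) : Prop :=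
  MemX1plus f ∧ Differentiable ℝ f ∧
    ∀ i : Fin N, UniformContinuous (fun x => pd f i x) ∧ ∃ C, ∀ x, |pd f i x| ≤ C

section Helpers

variable {N : ℕ} {f g U V : Eu N → ℝ} {i j : Fin N} {x : Eu N}

lemma grad_apply (f : Eu N → ℝ) (x : Eu N) (i : Fin N) :
    gradient f x i = pd f i x := by
  have : gradient f x i = ⟪gradient f x, EuclideanSpace.single i (1:ℝ)⟫ := by
    rw [EuclideanSpace.inner_single_right]; simp
  rw [this, gradient, InnerProductSpace.toDual_symm_apply]; rfl

lemma norm_sq_grad (f : Eu N → ℝ) (x : Eu N) :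
    ‖gradient f x‖ ^ 2 = ∑ i, (pd f i x) ^ 2 := by
  rw [← real_inner_self_eq_norm_sq, PiLp.inner_apply]
  simp [grad_apply, sq]

lemma inner_grad_grad (f g : Eu N → ℝ) (x : Eu N) :
    ⟪gradient f x, gradient g x⟫ = ∑ i, pd f i x * pd g i x := by
  rw [PiLp.inner_apply]; simp [grad_apply]; exact Finset.sum_congr rfl fun i _ => mul_comm _ _

lemma pd_add (hf : DifferentiableAt ℝ f x) (hg : DifferentiableAt ℝ g x) :
    pd (fun y => f y + g y) i x = pd f i x + pd g i x := by
  unfold pd; rw [fderiv_fun_add hf hg]; rfl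

lemma pd_sub (hf : DifferentiableAt ℝ f x) (hg : DifferentiableAt ℝ g x) :
    pd (fun y => f y - g y) i x = pd f i x - pd g i x := by
  unfold pd; rw [fderiv_fun_sub hf hg]; rfl

lemma pd_const_mul (c : ℝ) (hf : DifferentiableAt ℝ f x) :
    pd (fun y => c * f y) i x = c * pd f i x := by
  unfold pd; rw [fderiv_const_mul hf]; rfl

lemma pd_mul (hf : DifferentiableAt ℝ f x) (hg : DifferentiableAt ℝ g x) :
    pd (fun y => f y * g y) i x = pd f i x * g x + f x * pd g i x := by
  unfold pd; rw [fderiv_fun_mul hf hg]; simp [mul_comm]; ring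

lemma pd_sq (hf : DifferentiableAt ℝ f x) :
    pd (fun y => f y ^ 2) i x = 2 * f x * pd f i x := by
  have : (fun y => f y ^ 2) = fun y => f y * f y := by funext y; ring
  rw [this, pd_mul hf hf]; ring

lemma pd_sum {ι : Type*} (s : Finset ι) (F : ι → Eu N → ℝ)
    (hf : ∀ j ∈ s, DifferentiableAt ℝ (F j) x) :
    pd (fun y => ∑ j ∈ s, F j y) i x = ∑ j ∈ s, pd (F j) i x := by
  unfold pd; rw [fderiv_fun_sum hf]; simp

lemma contDiff_pd {n : ℕ} (hf : ContDiff ℝ (n+1 : ℕ) f) :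
    ContDiff ℝ n (fun x => pd f i x) := by
  have h := hf.fderiv_right (m := n) (by norm_cast)
  exact h.clm_apply contDiff_const

lemma pd2_symm' (hf : ContDiff ℝ 2 f) :
    pd (fun y => pd f j y) i x = pd (fun y => pd f i y) j x := by
  have hdf : Differentiable ℝ f := hf.differentiable (by simp)
  have hdf' : DifferentiableAt ℝ (fderiv ℝ f) x :=
    ((hf.fderiv_right (m := 1) le_rfl).differentiable (by simp)) x
  have hsym := second_derivative_symmetric (f := f) (f' := fderiv ℝ f)
    (f'' := fderiv ℝ (fderiv ℝ f) x) (fun y => (hdf y).hasFDerivAt) hdf'.hasFDerivAt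
  have key : ∀ k l : Fin N, pd (fun y => pd f l y) k x
      = fderiv ℝ (fderiv ℝ f) x (EuclideanSpace.single k 1) (EuclideanSpace.single l 1) := by
    intro k l
    unfold pd
    rw [fderiv_clm_apply hdf' (differentiableAt_const _)]
    simp
  rw [key i j, key j i, hsym]

lemma lap_pd_comm (hf : ContDiff ℝ 3 f) (i : Fin N) (x : Eu N) :
    ∑ j, pd (fun y => pd (fun z => pd f j z) j y) i x
      = ∑ j, pd (fun y => pd (fun z => pd f i z) j y) j x := by
  have hf3 : ContDiff ℝ ((2:ℕ)+1 : ℕ) f := by exact_mod_cast hf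
  have hf2 : ContDiff ℝ 2 f := hf.of_le (by norm_num)
  refine Finset.sum_congr rfl fun j _ => ?_
  have hgj : ContDiff ℝ 2 (fun z => pd f j z) := contDiff_pd hf3
  have step1 : pd (fun y => pd (fun z => pd f j z) j y) i x
      = pd (fun y => pd (fun z => pd f j z) i y) j x := pd2_symm' hgj
  rw [step1]
  congr 1
  funext y
  exact pd2_symm' hf2 (i := i) (j := j) (x := y) ▸ rfl

-- differentiability helpers
lemma contDiff_pd1 (hf : ContDiff ℝ 2 f) : ContDiff ℝ 1 (fun x => pd f i x) := by
  have : ContDiff ℝ ((1:ℕ)+1:ℕ) f := by exact_mod_cast hf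
  exact_mod_cast contDiff_pd (n := 1) this

lemma contDiff_pd2 (hf : ContDiff ℝ 3 f) : ContDiff ℝ 2 (fun x => pd f i x) := by
  have : ContDiff ℝ ((2:ℕ)+1:ℕ) f := by exact_mod_cast hf
  exact_mod_cast contDiff_pd (n := 2) this

lemma diff_pd_of_cd2 (hf : ContDiff ℝ 2 f) : Differentiable ℝ (fun x => pd f i x) :=
  (contDiff_pd1 hf).differentiable (by simp)

lemma diff_lap (hf : ContDiff ℝ 3 f) : Differentiable ℝ (fun y => lap f y) := by
  have : (fun y => lap f y) = fun y => ∑ j, pd (fun z => pd f j z) j y := rfl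
  rw [this]
  apply Differentiable.fun_sum
  intro j _
  exact diff_pd_of_cd2 (contDiff_pd2 hf)

lemma pd_lap (hf : ContDiff ℝ 3 f) (i : Fin N) (x : Eu N) :
    pd (fun y => lap f y) i x
      = ∑ j, pd (fun y => pd (fun z => pd f i z) j y) j x := by
  have h1 : (fun y => lap f y) = fun y => ∑ j, pd (fun z => pd f j z) j y := rfl
  rw [h1, pd_sum _ _ (fun j _ => (diff_pd_of_cd2 (contDiff_pd2 hf)) x)]
  exact lap_pd_comm hf i x

lemma divg_eq (hU : ContDiff ℝ 2 U) (hV : ContDiff ℝ 2 V) (x : Eu N) :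
    divg (fun y => U y • gradient V y) x
      = (∑ i, pd U i x * pd V i x) + U x * lap V x := by
  have h0 : divg (fun y => U y • gradient V y) x
      = ∑ i, pd (fun y => (U y • gradient V y) i) i x := rfl
  rw [h0]
  have h1 : ∀ i : Fin N, pd (fun y => (U y • gradient V y) i) i x
      = pd U i x * pd V i x + U x * pd (fun y => pd V i y) i x := by
    intro i
    have he : (fun y => (U y • gradient V y) i) = fun y => U y * pd V i y := by
      funext y
      show (U y • gradient V y) i = _
      rw [PiLp.smul_apply, smul_eq_mul, grad_apply]
    rw [he, pd_mul ((hU.differentiable (by simp)) x) ((diff_pd_of_cd2 hV) x)]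
  rw [Finset.sum_congr rfl (fun i _ => h1 i), Finset.sum_add_distrib, ← Finset.mul_sum]
  rfl

lemma lap_w (hU : ContDiff ℝ 2 U) (hV : ContDiff ℝ 3 V) (c : ℝ) (x : Eu N) :
    lap (fun y => U y + c * ∑ i, (pd V i y) ^ 2) x
      = lap U x
        + c * (2 * ∑ i, ∑ j, (pd (fun z => pd V i z) j x) ^ 2
          + 2 * ∑ i, pd V i x * ∑ j, pd (fun y => pd (fun z => pd V i z) j y) j x) := by
  have hV2 : ContDiff ℝ 2 V := hV.of_le (by norm_num)
  have hdU : Differentiable ℝ U := hU.differentiable (by simp)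
  have hdGi : ∀ i : Fin N, Differentiable ℝ (fun y => pd V i y) :=
    fun i => (contDiff_pd2 hV).differentiable (by simp)
  have hdHij : ∀ i j : Fin N, Differentiable ℝ (fun y => pd (fun z => pd V i z) j y) :=
    fun i j => diff_pd_of_cd2 (contDiff_pd2 hV)
  have hdsq : ∀ i : Fin N, Differentiable ℝ (fun y => (pd V i y) ^ 2) :=
    fun i => (hdGi i).pow 2
  -- inner derivative rewrite
  have hinner : ∀ j : Fin N, (fun y => pd (fun z => U z + c * ∑ i, (pd V i z) ^ 2) j y)
      = fun y => pd U j y + c * ∑ i, 2 * pd V i y * pd (fun z => pd V i z) j y := by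
    intro j
    funext y
    rw [pd_add (hdU y) (((Differentiable.fun_sum (fun i _ => hdsq i)).const_mul c) y),
      pd_const_mul c ((Differentiable.fun_sum (fun i _ => hdsq i)) y),
      pd_sum _ _ (fun i _ => (hdsq i) y)]
    congr 1
    congr 1
    exact Finset.sum_congr rfl fun i _ => pd_sq ((hdGi i) y)
  have h0 : lap (fun y => U y + c * ∑ i, (pd V i y) ^ 2) x
      = ∑ j, pd (fun y => pd (fun z => U z + c * ∑ i, (pd V i z) ^ 2) j y) j x := rfl
  rw [h0]
  have h1 : ∀ j : Fin N,
      pd (fun y => pd (fun z => U z + c * ∑ i, (pd V i z) ^ 2) j y) j x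
      = pd (fun y => pd U j y) j x
        + c * ∑ i, (2 * ((pd (fun z => pd V i z) j x) ^ 2
            + pd V i x * pd (fun y => pd (fun z => pd V i z) j y) j x)) := by
    intro j
    rw [hinner j]
    have hdprod : ∀ i : Fin N,
        Differentiable ℝ (fun y => 2 * pd V i y * pd (fun z => pd V i z) j y) :=
      fun i => (((hdGi i).const_mul 2).mul (hdHij i j))
    rw [pd_add (diff_pd_of_cd2 hU x)
        (((Differentiable.fun_sum (fun i _ => hdprod i)).const_mul c) x),
      pd_const_mul c ((Differentiable.fun_sum (fun i _ => hdprod i)) x),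
      pd_sum _ _ (fun i _ => (hdprod i) x)]
    congr 1
    congr 1
    refine Finset.sum_congr rfl fun i _ => ?_
    have he : (fun y => 2 * pd V i y * pd (fun z => pd V i z) j y)
        = fun y => (2 : ℝ) * (pd V i y * pd (fun z => pd V i z) j y) := by
      funext y; ring
    rw [he, pd_const_mul 2 (((hdGi i).fun_mul (hdHij i j)) x),
      pd_mul ((hdGi i) x) ((hdHij i j) x)]
    ring
  rw [Finset.sum_congr rfl (fun j _ => h1 j), Finset.sum_add_distrib, ← Finset.mul_sum]
  have h2 : (lap U x : ℝ) = ∑ j, pd (fun y => pd U j y) j x := rfl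
  rw [h2]
  congr 1
  congr 1
  rw [Finset.sum_comm]
  simp only [mul_add, Finset.sum_add_distrib]
  congr 1
  · rw [Finset.mul_sum]
    exact Finset.sum_congr rfl fun i _ => by rw [Finset.mul_sum]
  · rw [Finset.mul_sum]
    refine Finset.sum_congr rfl fun i _ => ?_
    rw [Finset.mul_sum, Finset.mul_sum]

end Helpers

/-- for `b > Nμχ/4` the quantity `w = u + (χ/(2μ))|∇v|²` satisfies the
differential inequality `w_t ≤ Δw + a w`. -/
theorem statement13 (N : ℕ) (hN : 1 ≤ N) (χ a b lam mu : ℝ)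
    (hχ : 0 < χ) (ha : 0 < a) (hb : 0 < b) (hlam : 0 < lam) (hmu : 0 < mu)
    (hcond : b > N * mu * χ / 4)
    (u v : Eu N → ℝ → ℝ)
    (hru : ∀ t : ℝ, 0 < t → ContDiff ℝ 2 (fun x => u x t))
    (hrv : ∀ t : ℝ, 0 < t → ContDiff ℝ 3 (fun x => v x t))
    (hpdeu : ∀ (x : Eu N) (t : ℝ), 0 < t →
      HasDerivAt (fun s => u x s)
        (lap (fun y => u y t) x
          - χ * divg (fun y => u y t • gradient (fun z => v z t) y) x
          + u x t * (a - b * u x t)) t)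
    (hpdev : ∀ (x : Eu N) (t : ℝ), 0 < t →
      HasDerivAt (fun s => v x s)
        (lap (fun y => v y t) x - lam * v x t + mu * u x t) t)
    (hgv : ∀ (x : Eu N) (t : ℝ), 0 < t →
      HasDerivAt (fun s => gradient (fun y => v y s) x)
        (gradient (fun y => deriv (fun s => v y s) t) x) t)
    (hgvc : ∀ x : Eu N, ContinuousOn
      (fun t : ℝ => gradient (fun y => deriv (fun s => v y s) t) x) (Set.Ioi 0)) :
    ∀ (x : Eu N) (t : ℝ), 0 < t →
      deriv (fun s => u x s + χ / (2 * mu) * ‖gradient (fun y => v y s) x‖ ^ 2) t ≤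
        lap (fun y => u y t + χ / (2 * mu) * ‖gradient (fun z => v z t) y‖ ^ 2) x
          + a * (u x t + χ / (2 * mu) * ‖gradient (fun y => v y t) x‖ ^ 2) := by
  intro x t ht
  set c : ℝ := χ / (2 * mu) with hcdef
  have hmu0 : mu ≠ 0 := ne_of_gt hmu
  have hc0 : 0 < c := by rw [hcdef]; positivity
  have hU2 : ContDiff ℝ 2 (fun y => u y t) := hru t ht
  have hV3 : ContDiff ℝ 3 (fun y => v y t) := hrv t ht
  have hV2 : ContDiff ℝ 2 (fun y => v y t) := hV3.of_le (by norm_num)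
  have hdU : Differentiable ℝ (fun y => u y t) := hU2.differentiable (by simp)
  have hdV : Differentiable ℝ (fun y => v y t) := hV2.differentiable (by simp)
  have hdlap : Differentiable ℝ (fun y => lap (fun z => v z t) y) := diff_lap hV3
  -- time derivative of the norm-squared of the gradient
  have hg := hgv x t ht
  have hFeq : (fun y => deriv (fun s => v y s) t)
      = (fun y => lap (fun z => v z t) y - lam * v y t + mu * u y t) :=
    funext fun y => (hpdev y t ht).deriv
  rw [hFeq] at hg
  have hsq : HasDerivAt (fun s => ‖gradient (fun y => v y s) x‖ ^ 2)
      (2 * ⟪gradient (fun y => v y t) x,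
        gradient (fun y => lap (fun z => v z t) y - lam * v y t + mu * u y t) x⟫) t := by
    have h := HasDerivAt.inner ℝ hg hg
    simp only [real_inner_self_eq_norm_sq] at h
    refine h.congr_deriv ?_
    rw [real_inner_comm]; ring
  have hderiv : deriv (fun s => u x s + c * ‖gradient (fun y => v y s) x‖ ^ 2) t
      = (lap (fun y => u y t) x
          - χ * divg (fun y => u y t • gradient (fun z => v z t) y) x
          + u x t * (a - b * u x t))
        + c * (2 * ⟪gradient (fun y => v y t) x,
          gradient (fun y => lap (fun z => v z t) y - lam * v y t + mu * u y t) x⟫) :=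
    ((hpdeu x t ht).add (hsq.const_mul c)).deriv
  rw [hderiv]
  -- rewrite the Laplacian of w
  have hWeq : (fun y => u y t + c * ‖gradient (fun z => v z t) y‖ ^ 2)
      = fun y => u y t + c * ∑ i, (pd (fun z => v z t) i y) ^ 2 := by
    funext y; rw [norm_sq_grad]
  rw [hWeq, lap_w hU2 hV3 c x, divg_eq hU2 hV2 x, norm_sq_grad, inner_grad_grad]
  -- expand the gradient of the right-hand side of the v-equation
  have hpdF : ∀ i : Fin N,
      pd (fun y => lap (fun z => v z t) y - lam * v y t + mu * u y t) i x
      = (∑ j, pd (fun y => pd (fun z => pd (fun w => v w t) i z) j y) j x)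
        - lam * pd (fun y => v y t) i x + mu * pd (fun y => u y t) i x := by
    intro i
    rw [pd_add ((hdlap.fun_sub (hdV.const_mul lam)) x) ((hdU.const_mul mu) x),
      pd_sub (hdlap x) ((hdV.const_mul lam) x),
      pd_const_mul lam (hdV x), pd_const_mul mu (hdU x), pd_lap hV3]
  have hexp : ∑ i, pd (fun y => v y t) i x
        * pd (fun y => lap (fun z => v z t) y - lam * v y t + mu * u y t) i x
      = (∑ i, pd (fun y => v y t) i x
          * ∑ j, pd (fun y => pd (fun z => pd (fun w => v w t) i z) j y) j x)
        - lam * ∑ i, (pd (fun y => v y t) i x) ^ 2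
        + mu * ∑ i, pd (fun y => u y t) i x * pd (fun y => v y t) i x := by
    rw [Finset.mul_sum, Finset.mul_sum, ← Finset.sum_sub_distrib, ← Finset.sum_add_distrib]
    refine Finset.sum_congr rfl fun i _ => ?_
    rw [hpdF i]; ring
  rw [hexp]
  -- scalar inequality
  have hNpos : (0:ℝ) < N := by exact_mod_cast Nat.lt_of_lt_of_le Nat.zero_lt_one hN
  have h4b : (N:ℝ) * mu * χ < 4 * b := by linarith
  have hS : 0 ≤ ∑ i, ∑ j, (pd (fun z => pd (fun w => v w t) i z) j x) ^ 2 :=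
    Finset.sum_nonneg fun i _ => Finset.sum_nonneg fun j _ => sq_nonneg _
  have hsG2 : 0 ≤ ∑ i, (pd (fun y => v y t) i x) ^ 2 :=
    Finset.sum_nonneg fun i _ => sq_nonneg _
  have hTS : (lap (fun z => v z t) x) ^ 2
      ≤ N * ∑ i, ∑ j, (pd (fun z => pd (fun w => v w t) i z) j x) ^ 2 := by
    have h0 : lap (fun z => v z t) x
        = ∑ i, pd (fun y => pd (fun z => v z t) i y) i x := rfl
    rw [h0]
    calc (∑ i, pd (fun y => pd (fun z => v z t) i y) i x) ^ 2
        ≤ (Finset.univ.card : ℝ)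
            * ∑ i, (pd (fun y => pd (fun z => v z t) i y) i x) ^ 2 :=
          sq_sum_le_card_mul_sum_sq
      _ = N * ∑ i, (pd (fun y => pd (fun z => v z t) i y) i x) ^ 2 := by
          simp [Finset.card_univ]
      _ ≤ N * ∑ i, ∑ j, (pd (fun z => pd (fun w => v w t) i z) j x) ^ 2 := by
          refine mul_le_mul_of_nonneg_left ?_ (by positivity)
          refine Finset.sum_le_sum fun i _ => ?_
          exact Finset.single_le_sum (f := fun j =>
            (pd (fun z => pd (fun w => v w t) i z) j x) ^ 2)
            (fun j _ => sq_nonneg _) (Finset.mem_univ i)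
  set T : ℝ := lap (fun z => v z t) x
  set S : ℝ := ∑ i, ∑ j, (pd (fun z => pd (fun w => v w t) i z) j x) ^ 2
  set A : ℝ := u x t
  have hkey : 0 ≤ χ * (A * T) + b * A ^ 2 + 2 * c * S := by
    have hmul : 0 ≤ mu * N * (χ * (A * T) + b * A ^ 2 + 2 * c * S) := by
      have e : mu * N * (χ * (A * T) + b * A ^ 2 + 2 * c * S)
          = mu * N * (χ * A * T) + mu * N * (b * A ^ 2) + N * (χ * S) := by
        rw [hcdef]; field_simp
      rw [e]
      have h1 : 0 ≤ 4 * b * χ * ((N:ℝ) * S - T ^ 2) :=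
        mul_nonneg (by positivity) (by linarith)
      have h2 : 0 ≤ mu * N * (2 * b * A + χ * T) ^ 2 := by positivity
      have h3 : 0 ≤ χ * T ^ 2 * (4 * b - N * mu * χ) :=
        mul_nonneg (mul_nonneg hχ.le (sq_nonneg T)) (by linarith)
      nlinarith [h1, h2, h3, hb]
    nlinarith [hmul, mul_pos hmu hNpos]
  have hcancel : 2 * c * (mu * ∑ i, pd (fun y => u y t) i x * pd (fun y => v y t) i x)
      = χ * ∑ i, pd (fun y => u y t) i x * pd (fun y => v y t) i x := by
    rw [hcdef]; field_simp
  linarith [hkey, hcancel,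
    mul_nonneg (mul_nonneg hlam.le hc0.le) hsG2,
    mul_nonneg (mul_nonneg ha.le hc0.le) hsG2]
end
end

section
/- Suppose b > Nμχ/4. Let u₀ ∈ X₁⁺, v₀ ∈ X₂⁺, and let (u, v) be a bounded nonnegative global classical solution of (KS) with initial data (u₀, v₀) such that v is three times continuously differentiable in x with ∂_t ∇v = ∇ ∂_t v on ℝ^N × (0,∞), ∇v is continuous on ℝ^N × [0,∞) with ∇v(·,0) = ∇v₀, and u + (χ/(2μ))|∇v|² is bounded on ℝ^N × [0,T] for every T > 0. Let 0 < k < √a, set c = (k² + a)/k, and let ξ ∈ S^{N−1} and M > 0 be such that u₀(x) + (χ/(2μ)) |∇v₀(x)|² ≤ M e^{−k x·ξ} for all x ∈ ℝ^N. Then u(x,t) ≤ M e^{−k(x·ξ − c t)} for all x ∈ ℝ^N and t > 0. -/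
open Real Filter MeasureTheory RealInnerProductSpace

noncomputable section

namespace KS
variable {N : ℕ}

lemma grad_inner (f : Eu N → ℝ) (x y : Eu N) : ⟪gradient f x, y⟫ = fderiv ℝ f x y :=
  InnerProductSpace.toDual_symm_apply

lemma grad_apply (f : Eu N → ℝ) (x : Eu N) (i : Fin N) :
    gradient f x i = pd f i x := by
  rw [pd, ← grad_inner, EuclideanSpace.inner_single_right]
  simp

lemma norm_sq_eq_sum (q : Eu N) : ‖q‖ ^ 2 = ∑ i, (q i) ^ 2 := by
  rw [← real_inner_self_eq_norm_sq, PiLp.inner_apply]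
  simp [sq]

lemma contDiff_pd {n m : ℕ} {f : Eu N → ℝ} (hf : ContDiff ℝ n f) (h : m + 1 ≤ n) (i : Fin N) :
    ContDiff ℝ m (fun y => pd f i y) := by
  have h1 : ContDiff ℝ m (fderiv ℝ f) := hf.fderiv_right (by exact_mod_cast h)
  exact (ContinuousLinearMap.apply ℝ ℝ (EuclideanSpace.single i 1)).contDiff.comp h1

lemma diff_pd {f : Eu N → ℝ} (hf : ContDiff ℝ 2 f) (i : Fin N) :
    Differentiable ℝ (fun y => pd f i y) :=
  (contDiff_pd (m := 1) hf (by norm_num) i).differentiable (by norm_num)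

lemma hasFDerivAt_pd (f : Eu N → ℝ) (x : Eu N)
    (hf : DifferentiableAt ℝ (fderiv ℝ f) x) (j : Fin N) :
    HasFDerivAt (fun y => pd f j y)
      ((ContinuousLinearMap.apply ℝ ℝ (EuclideanSpace.single j 1)).comp
        (fderiv ℝ (fderiv ℝ f) x)) x := by
  have h := ((ContinuousLinearMap.apply ℝ ℝ (EuclideanSpace.single j 1)).hasFDerivAt).comp x
    hf.hasFDerivAt
  simpa [Function.comp_def, pd] using h

lemma fderiv_pd (f : Eu N → ℝ) (x : Eu N)
    (hf : DifferentiableAt ℝ (fderiv ℝ f) x) (j : Fin N) (w : Eu N) :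
    fderiv ℝ (fun y => pd f j y) x w
      = fderiv ℝ (fderiv ℝ f) x w (EuclideanSpace.single j 1) := by
  rw [(hasFDerivAt_pd f x hf j).fderiv]; rfl

lemma pd2_eq_snd (f : Eu N → ℝ) (x : Eu N)
    (hf : DifferentiableAt ℝ (fderiv ℝ f) x) (i j : Fin N) :
    pd2 f i j x = fderiv ℝ (fderiv ℝ f) x (EuclideanSpace.single i 1)
      (EuclideanSpace.single j 1) := by
  rw [pd2, pd, fderiv_pd f x hf j]

lemma pd2_symm {f : Eu N → ℝ} (hf : ContDiff ℝ 2 f) (i j : Fin N) (x : Eu N) :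
    pd2 f i j x = pd2 f j i x := by
  have hdf : Differentiable ℝ (fderiv ℝ f) :=
    (hf.fderiv_right (m := 1) (by norm_num)).differentiable (by norm_num)
  rw [pd2_eq_snd f x (hdf x) i j, pd2_eq_snd f x (hdf x) j i]
  exact second_derivative_symmetric (fun y => (hf.differentiable (by norm_num) y).hasFDerivAt)
    (hdf x).hasFDerivAt _ _

lemma pd_congr {f g : Eu N → ℝ} (h : ∀ y, f y = g y) (i : Fin N) (x : Eu N) :
    pd f i x = pd g i x := by
  have : f = g := funext h
  rw [pd, pd, this]

lemma pd_add {f g : Eu N → ℝ} (hf : DifferentiableAt ℝ f x) (hg : DifferentiableAt ℝ g x)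
    (i : Fin N) : pd (fun y => f y + g y) i x = pd f i x + pd g i x := by
  rw [pd, fderiv_fun_add hf hg]; rfl

lemma pd_sub {f g : Eu N → ℝ} (hf : DifferentiableAt ℝ f x) (hg : DifferentiableAt ℝ g x)
    (i : Fin N) : pd (fun y => f y - g y) i x = pd f i x - pd g i x := by
  rw [pd, fderiv_fun_sub hf hg]; rfl

lemma pd_const_mul {f : Eu N → ℝ} (hf : DifferentiableAt ℝ f x) (c : ℝ)
    (i : Fin N) : pd (fun y => c * f y) i x = c * pd f i x := by
  rw [pd, fderiv_const_mul hf c]; rfl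

lemma pd_const (c : ℝ) (i : Fin N) (x : Eu N) : pd (fun _ => c) i x = 0 := by
  rw [pd, fderiv_fun_const]; rfl

lemma pd_mul {f g : Eu N → ℝ} (hf : DifferentiableAt ℝ f x) (hg : DifferentiableAt ℝ g x)
    (i : Fin N) : pd (fun y => f y * g y) i x = f x * pd g i x + g x * pd f i x := by
  rw [pd, fderiv_fun_mul hf hg]; simp [pd]

lemma pd_sum {ι : Type*} (s : Finset ι) {f : ι → Eu N → ℝ}
    (hf : ∀ j ∈ s, DifferentiableAt ℝ (f j) x) (i : Fin N) :
    pd (fun y => ∑ j ∈ s, f j y) i x = ∑ j ∈ s, pd (f j) i x := by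
  rw [pd, fderiv_fun_sum hf]; simp [pd]


-- ===== Part 2 =====
section part2
variable {N : ℕ} {x : Eu N} {f g V U : Eu N → ℝ}

lemma lap_congr (h : ∀ y, f y = g y) (x : Eu N) : lap f x = lap g x := by
  have : f = g := funext h
  rw [lap, lap, this]

lemma pd2_add (hf : ContDiff ℝ 2 f) (hg : ContDiff ℝ 2 g) (i j : Fin N) (x : Eu N) :
    pd2 (fun y => f y + g y) i j x = pd2 f i j x + pd2 g i j x := by
  rw [pd2, pd_congr (g := fun y => pd f j y + pd g j y)
    (fun y => pd_add (hf.differentiable (by norm_num) y) (hg.differentiable (by norm_num) y) j)]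
  exact pd_add (diff_pd hf j x) (diff_pd hg j x) i

lemma pd2_sub (hf : ContDiff ℝ 2 f) (hg : ContDiff ℝ 2 g) (i j : Fin N) (x : Eu N) :
    pd2 (fun y => f y - g y) i j x = pd2 f i j x - pd2 g i j x := by
  rw [pd2, pd_congr (g := fun y => pd f j y - pd g j y)
    (fun y => pd_sub (hf.differentiable (by norm_num) y) (hg.differentiable (by norm_num) y) j)]
  exact pd_sub (diff_pd hf j x) (diff_pd hg j x) i

lemma pd2_const_mul (hf : ContDiff ℝ 2 f) (c : ℝ) (i j : Fin N) (x : Eu N) :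
    pd2 (fun y => c * f y) i j x = c * pd2 f i j x := by
  rw [pd2, pd_congr (g := fun y => c * pd f j y)
    (fun y => pd_const_mul (hf.differentiable (by norm_num) y) c j)]
  exact pd_const_mul (diff_pd hf j x) c i

lemma lap_add (hf : ContDiff ℝ 2 f) (hg : ContDiff ℝ 2 g) (x : Eu N) :
    lap (fun y => f y + g y) x = lap f x + lap g x := by
  rw [lap, lap, lap, ← Finset.sum_add_distrib]
  exact Finset.sum_congr rfl fun i _ => pd2_add hf hg i i x

lemma lap_sub (hf : ContDiff ℝ 2 f) (hg : ContDiff ℝ 2 g) (x : Eu N) :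
    lap (fun y => f y - g y) x = lap f x - lap g x := by
  rw [lap, lap, lap, ← Finset.sum_sub_distrib]
  exact Finset.sum_congr rfl fun i _ => pd2_sub hf hg i i x

lemma lap_const_mul (hf : ContDiff ℝ 2 f) (c : ℝ) (x : Eu N) :
    lap (fun y => c * f y) x = c * lap f x := by
  rw [lap, lap, Finset.mul_sum]
  exact Finset.sum_congr rfl fun i _ => pd2_const_mul hf c i i x

lemma lap_sum {ι : Type*} (s : Finset ι) (F : ι → Eu N → ℝ)
    (hF : ∀ j ∈ s, ContDiff ℝ 2 (F j)) (x : Eu N) :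
    lap (fun y => ∑ j ∈ s, F j y) x = ∑ j ∈ s, lap (F j) x := by
  classical
  induction s using Finset.induction_on with
  | empty =>
      rw [lap_congr (g := fun _ => (0:ℝ)) (fun y => by simp), Finset.sum_empty]
      have : ∀ i : Fin N, pd2 (fun _ => (0:ℝ)) i i x = 0 := fun i => by
        rw [pd2, pd_congr (g := fun _ => (0:ℝ)) (fun y => pd_const 0 i y) i x, pd_const]
      rw [lap, Finset.sum_congr rfl fun i _ => this i, Finset.sum_const, smul_zero]
  | @insert a s' ha ih =>
      rw [Finset.sum_insert ha,
        lap_congr (g := fun y => F a y + ∑ j ∈ s', F j y)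
          (fun y => by rw [Finset.sum_insert ha]) x,
        lap_add (hF a (Finset.mem_insert_self a s'))
          (ContDiff.sum fun j hj' => hF j (Finset.mem_insert_of_mem hj')) x,
        ih (fun j hj' => hF j (Finset.mem_insert_of_mem hj'))]

lemma lap_sq (h : Eu N → ℝ) (hh : ContDiff ℝ 2 h) (x : Eu N) :
    lap (fun y => h y ^ 2) x = 2 * h x * lap h x + 2 * ∑ i, (pd h i x) ^ 2 := by
  have hd := hh.differentiable (by norm_num)
  rw [lap, lap]
  have key : ∀ i, pd2 (fun y => h y ^ 2) i i x
      = 2 * (h x * pd2 h i i x) + 2 * (pd h i x) ^ 2 := by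
    intro i
    rw [pd2, pd_congr (g := fun y => 2 * (h y * pd h i y)) (fun y => by
      rw [pd_congr (g := fun z => h z * h z) (fun z => sq (h z) ▸ by ring) i,
        pd_mul (hd y) (hd y)]; ring)]
    rw [pd_const_mul (f := fun y => h y * pd h i y) ((hd x).mul (diff_pd hh i x)) 2,
      pd_mul (hd x) (diff_pd hh i x)]
    rw [← pd2]; ring
  rw [Finset.mul_sum, Finset.mul_sum, ← Finset.sum_add_distrib]
  refine Finset.sum_congr rfl fun i _ => ?_
  rw [key i]; ring

lemma pd_lap (hV : ContDiff ℝ 3 V) (j : Fin N) (x : Eu N) :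
    pd (fun y => lap V y) j x = ∑ i, pd2 (fun y => pd V j y) i i x := by
  have hV2 : ContDiff ℝ 2 V := hV.of_le (by norm_num)
  have hpdC2 : ∀ i : Fin N, ContDiff ℝ 2 (fun y => pd V i y) :=
    fun i => contDiff_pd hV (by norm_num) i
  rw [pd_congr (g := fun y => ∑ i, pd2 V i i y) (fun y => by rw [lap]) j,
    pd_sum (f := fun i y => pd2 V i i y) Finset.univ (fun i _ => diff_pd (hpdC2 i) i x) j]
  refine Finset.sum_congr rfl fun i _ => ?_
  have h1 : pd (fun y => pd2 V i i y) j x = pd2 (fun y => pd V i y) j i x := rfl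
  rw [h1, pd2_symm (hpdC2 i) j i x]
  show pd (fun y => pd (fun z => pd V i z) j y) i x
    = pd (fun y => pd (fun z => pd V j z) i y) i x
  exact pd_congr (fun y => pd2_symm hV2 j i y) i x

lemma inner_grad_grad (U V : Eu N → ℝ) (x : Eu N) :
    ⟪gradient U x, gradient V x⟫ = ∑ i, pd U i x * pd V i x := by
  rw [PiLp.inner_apply]
  simp [grad_apply]
  exact Finset.sum_congr rfl fun i _ => mul_comm _ _

lemma norm_grad_sq (V : Eu N → ℝ) (x : Eu N) :
    ‖gradient V x‖ ^ 2 = ∑ i, (pd V i x) ^ 2 := by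
  rw [norm_sq_eq_sum]; simp [grad_apply]

lemma contDiff_norm_grad_sq (hV : ContDiff ℝ 3 V) :
    ContDiff ℝ 2 (fun y => ‖gradient V y‖ ^ 2) := by
  have : (fun y => ‖gradient V y‖ ^ 2) = fun y => ∑ i, (pd V i y) ^ 2 :=
    funext fun y => norm_grad_sq V y
  rw [this]
  exact ContDiff.sum fun i _ => (contDiff_pd hV (by norm_num) i).pow 2

lemma lap_norm_grad_sq (hV : ContDiff ℝ 3 V) (x : Eu N) :
    lap (fun y => ‖gradient V y‖ ^ 2) x
      = 2 * ∑ j, pd V j x * pd (fun y => lap V y) j x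
        + 2 * ∑ j, ∑ i, (pd2 V i j x) ^ 2 := by
  have hpdC2 : ∀ i : Fin N, ContDiff ℝ 2 (fun y => pd V i y) :=
    fun i => contDiff_pd hV (by norm_num) i
  rw [lap_congr (g := fun y => ∑ j, (pd V j y) ^ 2) (fun y => norm_grad_sq V y) x,
    lap_sum Finset.univ _ (fun j _ => (hpdC2 j).pow 2) x]
  have key : ∀ j : Fin N, lap (fun y => (pd V j y) ^ 2) x
      = 2 * (pd V j x * pd (fun y => lap V y) j x) + 2 * ∑ i, (pd2 V i j x) ^ 2 := by
    intro j
    rw [lap_sq _ (hpdC2 j) x]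
    have h3 : lap (fun y => pd V j y) x = pd (fun y => lap V y) j x := by
      rw [pd_lap hV j x]; rfl
    have h4 : ∑ i, (pd (fun y => pd V j y) i x) ^ 2 = ∑ i, (pd2 V i j x) ^ 2 :=
      Finset.sum_congr rfl fun i _ => rfl
    rw [h3, h4]; ring
  rw [Finset.mul_sum, Finset.mul_sum, ← Finset.sum_add_distrib]
  exact Finset.sum_congr rfl fun j _ => key j

lemma divg_grad (V : Eu N → ℝ) (x : Eu N) :
    divg (fun y => gradient V y) x = lap V x := by
  rw [divg, lap]
  refine Finset.sum_congr rfl fun i _ => ?_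
  have : (fun y => gradient V y i) = fun y => pd V i y := funext fun y => grad_apply V y i
  rw [this]; rfl

lemma divg_smul_grad (hU : Differentiable ℝ U) (hV : ContDiff ℝ 2 V) (x : Eu N) :
    divg (fun y => U y • gradient V y) x
      = ∑ i, pd U i x * pd V i x + U x * lap V x := by
  rw [divg]
  have key : ∀ i : Fin N,
      fderiv ℝ (fun y => (U y • gradient V y) i) x (EuclideanSpace.single i 1)
        = U x * pd2 V i i x + pd V i x * pd U i x := by
    intro i
    have h1 : (fun y => (U y • gradient V y) i) = fun y => U y * pd V i y :=
      funext fun y => by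
        show U y * gradient V y i = _
        rw [grad_apply]
    rw [h1, ← pd, pd_mul (hU x) (diff_pd hV i x)]
    rfl
  rw [Finset.sum_congr rfl (fun i _ => key i), Finset.sum_add_distrib, lap, Finset.mul_sum,
    add_comm]
  congr 1
  exact Finset.sum_congr rfl fun i _ => mul_comm _ _

end part2
-- ===== Part 3 =====
section part3
open Topology
variable {N : ℕ} {x : Eu N}

lemma lap_const (c : ℝ) (x : Eu N) : lap (fun _ : Eu N => c) x = 0 := by
  have : ∀ i : Fin N, pd2 (fun _ : Eu N => c) i i x = 0 := fun i => by
    rw [pd2, pd_congr (g := fun _ => (0:ℝ)) (fun y => pd_const c i y) i x, pd_const]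
  rw [lap, Finset.sum_congr rfl fun i _ => this i, Finset.sum_const, smul_zero]

lemma contDiff_coord (j : Fin N) {n : ℕ} : ContDiff ℝ n (fun y : Eu N => y j) :=
  (EuclideanSpace.proj j : Eu N →L[ℝ] ℝ).contDiff

lemma pd_coord (j i : Fin N) (x : Eu N) :
    pd (fun y : Eu N => y j) i x = if i = j then 1 else 0 := by
  have hco : (fun y : Eu N => y j) = ⇑(EuclideanSpace.proj (𝕜 := ℝ) j) := rfl
  rw [pd, hco, ContinuousLinearMap.fderiv]
  show EuclideanSpace.single i (1:ℝ) j = _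
  rw [EuclideanSpace.single_apply]
  by_cases h : i = j
  · simp [h]
  · rw [if_neg (fun heq => h heq.symm), if_neg h]

lemma lap_coord (j : Fin N) (x : Eu N) : lap (fun y : Eu N => y j) x = 0 := by
  have : ∀ i : Fin N, pd2 (fun y : Eu N => y j) i i x = 0 := fun i => by
    rw [pd2, pd_congr (g := fun _ => if i = j then (1:ℝ) else 0)
      (fun y => pd_coord j i y) i x, pd_const]
  rw [lap, Finset.sum_congr rfl fun i _ => this i, Finset.sum_const, smul_zero]

lemma lap_normsq (x : Eu N) : lap (fun y : Eu N => ‖y‖ ^ 2) x = 2 * N := by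
  rw [lap_congr (g := fun y => ∑ j, (y j) ^ 2) (fun y => norm_sq_eq_sum y) x,
    lap_sum Finset.univ _ (fun j _ => (contDiff_coord j).pow 2) x]
  have key : ∀ j : Fin N, lap (fun y : Eu N => (y j) ^ 2) x = 2 := by
    intro j
    rw [lap_sq _ (contDiff_coord j) x, lap_coord j x]
    have : ∀ i : Fin N, (pd (fun y : Eu N => y j) i x) ^ 2
        = if i = j then 1 else 0 := fun i => by
      rw [pd_coord]; split <;> norm_num
    rw [Finset.sum_congr rfl fun i _ => this i, Finset.sum_ite_eq' Finset.univ j (fun _ => (1:ℝ))]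
    simp
  rw [Finset.sum_congr rfl fun j _ => key j, Finset.sum_const]
  simp [mul_comm]

lemma pd_exp {g : Eu N → ℝ} (hg : DifferentiableAt ℝ g x) (i : Fin N) :
    pd (fun y => Real.exp (g y)) i x = Real.exp (g x) * pd g i x := by
  rw [pd, fderiv_exp hg]; simp [pd]

lemma pd_inner_xi (ξ : Eu N) (i : Fin N) (x : Eu N) :
    pd (fun y : Eu N => ⟪y, ξ⟫) i x = ξ i := by
  have h : (fun y : Eu N => ⟪y, ξ⟫) = fun y => (innerSL ℝ ξ) y :=
    funext fun y => by rw [innerSL_apply_apply]; exact real_inner_comm ξ y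
  rw [pd, h, (innerSL ℝ ξ).fderiv]
  simp [EuclideanSpace.inner_single_right]

lemma contDiff_inner_xi (ξ : Eu N) {n : ℕ} : ContDiff ℝ n (fun y : Eu N => ⟪y, ξ⟫) := by
  have h : (fun y : Eu N => ⟪y, ξ⟫) = fun y => (innerSL ℝ ξ) y :=
    funext fun y => by rw [innerSL_apply_apply]; exact real_inner_comm ξ y
  rw [h]; exact (innerSL ℝ ξ).contDiff

/-- Second derivative test: interior max implies nonpositive second derivative. -/
lemma second_deriv_nonpos_of_max {φ : ℝ → ℝ} (h : ContDiff ℝ 2 φ)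
    (hmax : ∀ s : ℝ, φ s ≤ φ 0) : deriv (deriv φ) 0 ≤ 0 := by
  by_contra hL
  push_neg at hL
  have hd : Differentiable ℝ φ := h.differentiable (by norm_num)
  have hd2 : Differentiable ℝ (deriv φ) := by
    have : ContDiff ℝ (1+1) φ := by norm_num at h ⊢; exact h
    rw [contDiff_succ_iff_deriv] at this
    exact this.2.2.differentiable (by norm_num)
  have h0 : deriv φ 0 = 0 :=
    (IsLocalMax.deriv_eq_zero (Filter.Eventually.of_forall hmax : IsLocalMax φ 0))
  have ht := hasDerivAt_iff_tendsto_slope.1 (hd2 0).hasDerivAt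
  have h2 : (𝓝[>] (0:ℝ)) ≤ 𝓝[≠] (0:ℝ) :=
    nhdsWithin_mono _ (fun s hs => ne_of_gt hs)
  have hev : ∀ᶠ s in 𝓝[>] (0:ℝ), 0 < slope (deriv φ) 0 s :=
    (ht.mono_left h2).eventually (lt_mem_nhds hL)
  have hev2 : ∀ᶠ s in 𝓝[>] (0:ℝ), 0 < deriv φ s := by
    filter_upwards [hev, self_mem_nhdsWithin] with s hs hs'
    have : slope (deriv φ) 0 s = deriv φ s / s := by
      rw [slope_def_field, h0]; ring
    rw [this] at hs
    have := mul_pos hs (show (0:ℝ) < s from hs')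
    rwa [div_mul_cancel₀] at this
    exact ne_of_gt hs'
  obtain ⟨η, hη, hsub⟩ := mem_nhdsGT_iff_exists_Ioo_subset.1 hev2
  have hmono : StrictMonoOn φ (Set.Icc 0 η) := by
    refine strictMonoOn_of_deriv_pos (convex_Icc 0 η) hd.continuous.continuousOn ?_
    intro s hs
    rw [interior_Icc] at hs
    exact hsub hs
  have h01 : (0:ℝ) ∈ Set.Icc (0:ℝ) η := ⟨le_refl _, le_of_lt hη⟩
  have h02 : η/2 ∈ Set.Icc (0:ℝ) η := ⟨by linarith [hη.out], by linarith [hη.out]⟩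
  have := hmono h01 h02 (by simpa using half_pos hη.out)
  exact absurd (hmax (η/2)) (not_le.2 this)

/-- At a max over `[0,T]` attained at `t ∈ (0,T]`, the derivative is nonnegative. -/
lemma deriv_nonneg_of_max {f : ℝ → ℝ} {d t T : ℝ} (hf : HasDerivAt f d t) (ht : 0 < t)
    (hT : t ≤ T) (hmax : ∀ s, 0 ≤ s → s ≤ T → f s ≤ f t) : 0 ≤ d := by
  have h1 := hasDerivAt_iff_tendsto_slope.1 hf
  have h2 : (𝓝[<] t) ≤ 𝓝[≠] t := nhdsWithin_mono _ (fun s hs => ne_of_lt hs)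
  refine ge_of_tendsto (h1.mono_left h2) ?_
  filter_upwards [Ioo_mem_nhdsLT_of_mem (⟨ht, le_refl t⟩ : t ∈ Set.Ioc 0 t)] with s hs
  have hle : f s ≤ f t := hmax s hs.1.le (hs.2.le.trans hT)
  have hst : s - t < 0 := sub_neg.2 hs.2
  rw [slope_def_field]
  exact div_nonneg_of_nonpos (by linarith) hst.le


/-- At a global spatial max, the Laplacian is nonpositive. -/
lemma lap_nonpos_of_max {ψ : Eu N → ℝ} (h : ContDiff ℝ 2 ψ) {x : Eu N}
    (hmax : ∀ y, ψ y ≤ ψ x) : lap ψ x ≤ 0 := by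
  rw [lap]
  refine Finset.sum_nonpos fun i _ => ?_
  set e : Eu N := EuclideanSpace.single i 1 with he
  set line : ℝ → Eu N := fun s => x + s • e with hline
  have hlineC : ContDiff ℝ 2 line := contDiff_const.add (contDiff_id.smul contDiff_const)
  have hlineD : ∀ s : ℝ, HasDerivAt line e s := fun s => by
    simpa [hline] using ((hasDerivAt_id s).smul_const e).const_add x
  set φ : ℝ → ℝ := fun s => ψ (line s) with hφ
  have hφC : ContDiff ℝ 2 φ := h.comp hlineC
  have hline0 : line 0 = x := by simp [hline]
  have hφmax : ∀ s, φ s ≤ φ 0 := fun s => by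
    rw [hφ]; simp only [hline0]; exact hmax _
  have hd1 : ∀ s, HasDerivAt φ (pd ψ i (line s)) s := fun s =>
    ((h.differentiable (by norm_num) (line s)).hasFDerivAt.comp_hasDerivAt s (hlineD s))
  have hderiv1 : deriv φ = fun s => pd ψ i (line s) := funext fun s => (hd1 s).deriv
  have hd2 : HasDerivAt (fun s => pd ψ i (line s)) (pd2 ψ i i x) 0 := by
    have := ((diff_pd h i (line 0)).hasFDerivAt.comp_hasDerivAt 0 (hlineD 0))
    rw [hline0] at this
    exact this
  have : deriv (deriv φ) 0 = pd2 ψ i i x := by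
    rw [hderiv1]; exact hd2.deriv
  rw [← this]
  exact second_deriv_nonpos_of_max hφC hφmax

end part3
-- ===== Part 4 : maximum principle =====
section part4
open Topology
variable {N : ℕ}

set_option maxHeartbeats 1000000 in
lemma heat_max_principle (Z : Eu N → ℝ → ℝ)
    (hcont : ContinuousOn (fun p : Eu N × ℝ => Z p.1 p.2) {p : Eu N × ℝ | 0 ≤ p.2})
    (hreg : ∀ t : ℝ, 0 < t → ContDiff ℝ 2 (fun y => Z y t))
    (hder : ∀ (x : Eu N) (t : ℝ), 0 < t → ∃ d, HasDerivAt (fun s => Z x s) d t ∧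
      d ≤ lap (fun y => Z y t) x)
    (hbd : ∀ T : ℝ, 0 < T → ∃ C, ∀ (x : Eu N) (t : ℝ), 0 ≤ t → t ≤ T → Z x t ≤ C)
    (hinit : ∀ x, Z x 0 ≤ 0) :
    ∀ (x : Eu N) (t : ℝ), 0 ≤ t → Z x t ≤ 0 := by
  have claim : ∀ (δ ε : ℝ), 0 < δ → 0 < ε → ∀ (x₀ : Eu N) (t₀ : ℝ), 0 < t₀ →
      Z x₀ t₀ ≤ δ * (‖x₀‖^2 + 2*N*t₀) + ε*t₀ := by
    intro δ ε hδ hε x₀ t₀ ht₀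
    by_contra hcon
    push_neg at hcon
    obtain ⟨C₀, hC₀⟩ := hbd t₀ ht₀
    set C := max C₀ 0 with hC
    have hZle : ∀ (x : Eu N) (t : ℝ), 0 ≤ t → t ≤ t₀ → Z x t ≤ C :=
      fun x t h1 h2 => (hC₀ x t h1 h2).trans (le_max_left _ _)
    have hCnn : 0 ≤ C := le_max_right _ _
    set G : Eu N → ℝ → ℝ := fun x t => Z x t - δ * (‖x‖^2 + 2*N*t) - ε*t with hG
    have hGpos : 0 < G x₀ t₀ := by simp only [hG]; linarith
    set R : ℝ := Real.sqrt (C/δ) + 1 with hR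
    have hRpos : 0 < R := by positivity
    have hRbig : C < δ * R^2 := by
      have h1 : Real.sqrt (C/δ)^2 = C/δ := Real.sq_sqrt (by positivity)
      have h2 : C/δ + 1 ≤ R^2 := by rw [hR]; nlinarith [Real.sqrt_nonneg (C/δ)]
      calc C = δ * (C/δ) := by field_simp
      _ < δ * R^2 := by nlinarith
    have hfar : ∀ (x : Eu N) (t : ℝ), 0 ≤ t → t ≤ t₀ → 0 < G x t → ‖x‖ < R := by
      intro x t h1 h2 h3
      by_contra hxR
      push_neg at hxR
      have hsq : R^2 ≤ ‖x‖^2 := by nlinarith [hRpos.le, norm_nonneg x]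
      have hnx : δ*R^2 ≤ δ*‖x‖^2 := mul_le_mul_of_nonneg_left hsq hδ.le
      have hGle : G x t ≤ C - δ*‖x‖^2 := by
        have := hZle x t h1 h2
        simp only [hG]
        nlinarith [mul_nonneg (mul_nonneg (by positivity : (0:ℝ) ≤ 2*N) hδ.le) h1,
          mul_nonneg hε.le h1]
      linarith
    set K : Set (Eu N × ℝ) := Metric.closedBall (0:Eu N) R ×ˢ Set.Icc (0:ℝ) t₀ with hK
    have hKc : IsCompact K := (isCompact_closedBall _ _).prod isCompact_Icc
    have hKne : K.Nonempty := ⟨((0:Eu N), (0:ℝ)), Set.mk_mem_prod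
      (mem_closedBall_zero_iff.2 (by simpa using hRpos.le)) ⟨le_refl _, ht₀.le⟩⟩
    have hKsub : K ⊆ {p : Eu N × ℝ | 0 ≤ p.2} := fun p hp => hp.2.1
    have hGcont : ContinuousOn (fun p : Eu N × ℝ => G p.1 p.2) K := by
      simp only [hG]
      refine ContinuousOn.sub (ContinuousOn.sub (hcont.mono hKsub) ?_) ?_
      · exact Continuous.continuousOn (continuous_const.mul
          (((continuous_fst.norm).pow 2).add (continuous_const.mul continuous_snd)))
      · exact Continuous.continuousOn (continuous_const.mul continuous_snd)
    obtain ⟨p, hpK, hpmax⟩ := hKc.exists_isMaxOn hKne hGcont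
    obtain ⟨xs, ts⟩ := p
    have hx₀K : (x₀, t₀) ∈ K :=
      Set.mk_mem_prod (mem_closedBall_zero_iff.2 (hfar x₀ t₀ ht₀.le le_rfl hGpos).le) ⟨ht₀.le, le_rfl⟩
    have hGs : 0 < G xs ts := lt_of_lt_of_le hGpos (hpmax hx₀K)
    have hts0 : 0 ≤ ts := hpK.2.1
    have htst₀ : ts ≤ t₀ := hpK.2.2
    have hglob : ∀ (x : Eu N) (t : ℝ), 0 ≤ t → t ≤ t₀ → G x t ≤ G xs ts := by
      intro x t h1 h2
      rcases le_or_gt (G x t) 0 with h | h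
      · exact h.trans hGs.le
      · exact hpmax (Set.mk_mem_prod (mem_closedBall_zero_iff.2 (hfar x t h1 h2 h).le) ⟨h1, h2⟩)
    have hts : 0 < ts := by
      rcases eq_or_lt_of_le hts0 with h | h
      · exfalso
        have h0 : G xs 0 ≤ 0 := by
          simp only [hG]
          nlinarith [hinit xs, sq_nonneg ‖xs‖]
        rw [← h] at hGs
        linarith
      · exact h
    obtain ⟨d, hdZ, hdle⟩ := hder xs ts hts
    have hGd : HasDerivAt (fun s => G xs s) (d - (δ*(2*N) + ε)) ts := by
      have h1 : HasDerivAt (fun s : ℝ => δ * (‖xs‖^2 + 2*N*s) + ε*s) (δ*(2*N) + ε) ts := by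
        have ha := (((hasDerivAt_id ts).const_mul (2*(N:ℝ))).const_add (‖xs‖^2)).const_mul δ
        have hb := (hasDerivAt_id ts).const_mul ε
        have := ha.add hb
        simp only [mul_one, id_eq] at this
        exact this
      have h2 : (fun s => G xs s) = fun s => Z xs s - (δ * (‖xs‖^2 + 2*N*s) + ε*s) := by
        funext s; simp only [hG]; ring
      rw [h2]
      exact hdZ.sub h1
    have hd0 : 0 ≤ d - (δ*(2*N) + ε) :=
      deriv_nonneg_of_max hGd hts htst₀ (fun s h1 h2 => hglob xs s h1 h2)
    have hψC2 : ContDiff ℝ 2 (fun y => G y ts) := by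
      have h1 : (fun y => G y ts) = fun y => Z y ts -
          ((fun y : Eu N => δ * ‖y‖^2) y + (δ*(2*N*ts) + ε*ts)) := by
        funext y; simp only [hG]; ring
      rw [h1]
      exact (hreg ts hts).sub
        ((contDiff_const.mul (contDiff_norm_sq (𝕜 := ℝ))).add contDiff_const)
    have hψlap : lap (fun y => G y ts) xs ≤ 0 :=
      lap_nonpos_of_max hψC2 (fun y => hglob y ts hts0 htst₀)
    have hlapG : lap (fun y => G y ts) xs = lap (fun y => Z y ts) xs - δ*(2*N) := by
      have h1 : (fun y => G y ts) = fun y => Z y ts -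
          (δ * ‖y‖^2 + (δ*(2*N*ts) + ε*ts)) := by
        funext y; simp only [hG]; ring
      rw [h1, lap_sub (hreg ts hts)
        ((contDiff_const.mul (contDiff_norm_sq (𝕜 := ℝ))).add contDiff_const) xs,
        lap_add (contDiff_const.mul (contDiff_norm_sq (𝕜 := ℝ))) contDiff_const xs,
        lap_const_mul (contDiff_norm_sq (𝕜 := ℝ)) δ xs, lap_normsq xs, lap_const]
      ring
    linarith
  intro x t ht
  rcases eq_or_lt_of_le ht with h | h
  · rw [← h]; exact hinit x
  · by_contra hpos
    push_neg at hpos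
    set A := ‖x‖^2 + 2*N*t + t with hA
    have hApos : 0 < A := by
      have := sq_nonneg ‖x‖
      nlinarith [mul_nonneg (by positivity : (0:ℝ) ≤ 2*N) ht]
    set q := Z x t with hq
    have hstep : q ≤ (q/(2*A)) * A := by
      have hd : 0 < q/(2*A) := by positivity
      calc q ≤ (q/(2*A))*(‖x‖^2+2*N*t) + (q/(2*A))*t := claim _ _ hd hd x t h
      _ = (q/(2*A))*A := by rw [hA]; ring
    have : (q/(2*A)) * A = q/2 := by field_simp
    rw [this] at hstep
    linarith
end part4
-- ===== Part 5 : supersolution W and differential inequality =====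
section part5
open Topology
variable {N : ℕ}

lemma diff_lap {V : Eu N → ℝ} (hV : ContDiff ℝ 3 V) :
    Differentiable ℝ (fun y => lap V y) := by
  have h : (fun y => lap V y) = fun y => ∑ i, pd2 V i i y := funext fun y => rfl
  rw [h]
  exact Differentiable.fun_sum fun i _ => diff_pd (contDiff_pd hV (by norm_num) i) i

-- the supersolution W(x,t) = M exp(-k(⟪x,ξ⟫ - c t))
variable (M k c : ℝ) (ξ : Eu N)

def Wf (x : Eu N) (t : ℝ) : ℝ := M * Real.exp (-k * (⟪x, ξ⟫ - c * t))

lemma contDiff_Wf (t : ℝ) {n : ℕ} : ContDiff ℝ n (fun y => Wf M k c ξ y t) :=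
  contDiff_const.mul (contDiff_const.mul ((contDiff_inner_xi ξ).sub contDiff_const)).exp

lemma diff_inner_aux (t : ℝ) : Differentiable ℝ (fun y : Eu N => -k * (⟪y, ξ⟫ - c * t)) :=
  (contDiff_const.mul ((contDiff_inner_xi (n := 1) ξ).sub contDiff_const)).differentiable
    (by norm_num)

lemma pd_Wf (t : ℝ) (i : Fin N) (x : Eu N) :
    pd (fun y => Wf M k c ξ y t) i x = -k * ξ i * Wf M k c ξ x t := by
  show pd (fun y => M * Real.exp (-k * (⟪y, ξ⟫ - c * t))) i x
    = -k * ξ i * (M * Real.exp (-k * (⟪x, ξ⟫ - c * t)))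
  rw [pd_const_mul ((diff_inner_aux k c ξ t x).exp) M, pd_exp (diff_inner_aux k c ξ t x),
    pd_const_mul (f := fun y => ⟪y, ξ⟫ - c * t) (((contDiff_inner_xi (n := 1) ξ).differentiable (by norm_num) x).sub
      (differentiableAt_const _)) (-k),
    pd_sub (f := fun y => ⟪y, ξ⟫) (g := fun _ => c * t) ((contDiff_inner_xi (n := 1) ξ).differentiable (by norm_num) x)
      (differentiableAt_const _), pd_inner_xi, pd_const]
  ring

lemma lap_Wf (hξ : ‖ξ‖ = 1) (t : ℝ) (x : Eu N) :
    lap (fun y => Wf M k c ξ y t) x = k ^ 2 * Wf M k c ξ x t := by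
  have key : ∀ i : Fin N, pd2 (fun y => Wf M k c ξ y t) i i x
      = k^2 * (ξ i)^2 * Wf M k c ξ x t := by
    intro i
    rw [pd2, pd_congr (f := fun y => pd (fun z => Wf M k c ξ z t) i y)
      (g := fun y => (-k * ξ i) * Wf M k c ξ y t)
      (fun y => pd_Wf M k c ξ t i y) i x,
      pd_const_mul ((contDiff_Wf M k c ξ t (n := 1)).differentiable (by norm_num) x) _,
      pd_Wf M k c ξ t i x]
    ring
  rw [lap, Finset.sum_congr rfl fun i _ => key i,
    Finset.sum_congr rfl (fun i _ => show k^2 * (ξ i)^2 * Wf M k c ξ x t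
      = (k^2 * Wf M k c ξ x t) * (ξ i)^2 by ring), ← Finset.mul_sum]
  have h3 : ∑ i, (ξ i)^2 = 1 := by rw [← norm_sq_eq_sum, hξ]; norm_num
  rw [h3, mul_one]

lemma hasDerivAt_Wf (x : Eu N) (t : ℝ) :
    HasDerivAt (fun s => Wf M k c ξ x s) (k * c * Wf M k c ξ x t) t := by
  have h1 : HasDerivAt (fun s : ℝ => -k * (⟪x, ξ⟫ - c * s)) (k * c) t := by
    have := (((hasDerivAt_id t).const_mul c).const_sub ⟪x, ξ⟫).const_mul (-k)
    exact this.congr_deriv (by ring)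
  have h2 := (h1.exp).const_mul M
  show HasDerivAt (fun s => M * Real.exp (-k * (⟪x, ξ⟫ - c * s)))
    (k * c * (M * Real.exp (-k * (⟪x, ξ⟫ - c * t)))) t
  exact h2.congr_deriv (by ring)
end part5
-- ===== Part 6 : the key differential inequality =====
section part6
variable {N : ℕ}

set_option maxHeartbeats 2000000 in
lemma key_ineq (hN : 1 ≤ N) {χ a b lam mu : ℝ}
    (hχ : 0 < χ) (ha : 0 < a) (hmu : 0 < mu) (hlam : 0 < lam)
    (hcond : b > N * mu * χ / 4)
    (U V : Eu N → ℝ) (hU : ContDiff ℝ 2 U) (hV : ContDiff ℝ 3 V)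
    (x : Eu N) (hUnn : 0 ≤ U x) :
    lap U x - χ * divg (fun y => U y • gradient V y) x + U x * (a - b * U x)
      + χ / mu * (∑ i, pd V i x *
          (pd (fun y => lap V y) i x - lam * pd V i x + mu * pd U i x))
    ≤ (lap U x + χ / (2*mu) * lap (fun y => ‖gradient V y‖^2) x)
      + a * (U x + χ / (2*mu) * ‖gradient V x‖^2) := by
  have hV2 : ContDiff ℝ 2 V := hV.of_le (by norm_num)
  rw [divg_smul_grad (hU.differentiable (by norm_num)) hV2 x,
    lap_norm_grad_sq hV x, norm_grad_sq V x]
  set A := lap U x with hA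
  set L := lap V x with hL
  set u0 := U x with hu0
  set S1 := ∑ i, pd U i x * pd V i x with hS1
  set S2 := ∑ i, pd V i x * pd (fun y => lap V y) i x with hS2
  set S3 := ∑ i, (pd V i x)^2 with hS3
  set Q := ∑ j, ∑ i, (pd2 V i j x)^2 with hQdef
  have hT : ∑ i, pd V i x *
      (pd (fun y => lap V y) i x - lam * pd V i x + mu * pd U i x)
      = S2 - lam * S3 + mu * S1 := by
    rw [Finset.sum_congr rfl (fun i _ => show pd V i x *
        (pd (fun y => lap V y) i x - lam * pd V i x + mu * pd U i x)
        = pd V i x * pd (fun y => lap V y) i x - lam * (pd V i x)^2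
          + mu * (pd U i x * pd V i x) by ring),
      Finset.sum_add_distrib, Finset.sum_sub_distrib, ← Finset.mul_sum, ← Finset.mul_sum]
  rw [hT]
  have hS3nn : 0 ≤ S3 := Finset.sum_nonneg fun i _ => sq_nonneg _
  have hQnn : 0 ≤ Q := Finset.sum_nonneg fun j _ => Finset.sum_nonneg fun i _ => sq_nonneg _
  have hNpos : (0:ℝ) < N := by exact_mod_cast Nat.lt_of_lt_of_le Nat.zero_lt_one hN
  have h5 : L^2 ≤ N * ∑ i, (pd2 V i i x)^2 := by
    have := sq_sum_le_card_mul_sum_sq (s := (Finset.univ : Finset (Fin N)))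
      (f := fun i => pd2 V i i x)
    simpa [lap, hL] using this
  have h6 : ∑ i, (pd2 V i i x)^2 ≤ Q := by
    rw [hQdef]
    refine Finset.sum_le_sum fun j _ => ?_
    exact Finset.single_le_sum (f := fun i => (pd2 V i j x)^2)
      (fun i _ => sq_nonneg _) (Finset.mem_univ j)
  have hQ : L^2 ≤ N * Q := h5.trans (mul_le_mul_of_nonneg_left h6 hNpos.le)
  -- switch to r = χ/mu
  set r := χ / mu with hr
  have hrpos : 0 < r := div_pos hχ hmu
  have hχr : χ = r * mu := by rw [hr]; field_simp
  have e2 : χ / (2*mu) = r / 2 := by rw [hχr]; field_simp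
  rw [e2, hχr]
  -- key quadratic estimate
  have key0 : 0 ≤ N*Q + mu*N*u0*L + mu^2*N^2*u0^2/4 := by
    nlinarith [sq_nonneg (L + mu*N*u0/2), hQ]
  have key0' : 0 ≤ (N:ℝ) * (Q + mu*u0*L + mu^2*N*u0^2/4) := by linarith [key0]
  have key1 : 0 ≤ Q + mu*u0*L + mu^2*N*u0^2/4 := by
    by_contra hneg
    push_neg at hneg
    nlinarith [key0', hNpos]
  have hcond' : N * mu * (r*mu) / 4 < b := by rw [← hχr]; exact hcond
  nlinarith [mul_nonneg hrpos.le key1,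
    mul_nonneg (mul_nonneg hlam.le hrpos.le) hS3nn,
    mul_nonneg (mul_nonneg ha.le hrpos.le) hS3nn,
    mul_nonneg (sub_nonneg.2 hcond'.le) (sq_nonneg u0),
    mul_nonneg hrpos.le hQnn]
end part6
end KS

set_option maxHeartbeats 2000000 in
/-- exponential upper bound for `u` via comparison for
`w = u + (χ/(2μ))|∇v|²`: if `w(·,0) ≤ M e^{-k x·ξ}` then `u(x,t) ≤ M e^{-k(x·ξ-ct)}`
with `c = (k²+a)/k`. -/
theorem statement15 (N : ℕ) (hN : 1 ≤ N) (χ a b lam mu : ℝ)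
    (hχ : 0 < χ) (ha : 0 < a) (hb : 0 < b) (hlam : 0 < lam) (hmu : 0 < mu)
    (hcond : b > N * mu * χ / 4)
    (u₀ v₀ : Eu N → ℝ) (hu₀ : MemX1plus u₀) (hv₀ : MemX2plus v₀)
    (u v : Eu N → ℝ → ℝ)
    (hsol : IsClassicalSolution χ a b lam mu u v u₀ v₀)
    (hbd : BoundedSol u v) (hnn : NonnegSol u v)
    (hrv : ∀ t : ℝ, 0 < t → ContDiff ℝ 3 (fun x => v x t))
    (hgv : ∀ (x : Eu N) (t : ℝ), 0 < t →
      HasDerivAt (fun s => gradient (fun y => v y s) x)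
        (gradient (fun y => deriv (fun s => v y s) t) x) t)
    (hgvcont : ContinuousOn
      (fun p : Eu N × ℝ => gradient (fun y => v y p.2) p.1) {p : Eu N × ℝ | 0 ≤ p.2})
    (hgv0 : ∀ x : Eu N, gradient (fun y => v y 0) x = gradient v₀ x)
    (hwbd : ∀ T : ℝ, 0 < T → ∃ C, ∀ (x : Eu N) (t : ℝ), 0 ≤ t → t ≤ T →
      |u x t + χ / (2 * mu) * ‖gradient (fun y => v y t) x‖ ^ 2| ≤ C)
    (k c : ℝ) (hk : 0 < k) (hk' : k < Real.sqrt a) (hc : c = (k ^ 2 + a) / k)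
    (ξ : Eu N) (hξ : ‖ξ‖ = 1) (M : ℝ) (hM : 0 < M)
    (hinit : ∀ x : Eu N,
      u₀ x + χ / (2 * mu) * ‖gradient v₀ x‖ ^ 2 ≤ M * Real.exp (-k * ⟪x, ξ⟫)) :
    ∀ (x : Eu N) (t : ℝ), 0 < t →
      u x t ≤ M * Real.exp (-k * (⟪x, ξ⟫ - c * t)) := by
  have hkc : k * c = k^2 + a := by rw [hc]; field_simp
  have hmu2 : (0:ℝ) < 2 * mu := by linarith
  -- the comparison function Z
  have hZ0 : ∀ (y : Eu N) (s : ℝ), 0 ≤ s →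
      Real.exp (-(a*s)) * ((u y s + χ/(2*mu) * ‖gradient (fun z => v z s) y‖^2)
        - KS.Wf M k c ξ y s) ≤ 0 := by
    apply KS.heat_max_principle
    -- continuity
    · have cinner : Continuous (fun p : Eu N × ℝ => ⟪p.1, ξ⟫) := by
        have : (fun p : Eu N × ℝ => ⟪p.1, ξ⟫) = fun p => (innerSL ℝ ξ) p.1 :=
          funext fun p => by rw [innerSL_apply_apply]; exact real_inner_comm ξ p.1
        rw [this]; exact (innerSL ℝ ξ).continuous.comp continuous_fst
      have cW : Continuous (fun p : Eu N × ℝ => KS.Wf M k c ξ p.1 p.2) := by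
        refine continuous_const.mul (Real.continuous_exp.comp ?_)
        exact continuous_const.mul (cinner.sub (continuous_const.mul continuous_snd))
      have cw : ContinuousOn (fun p : Eu N × ℝ =>
          u p.1 p.2 + χ/(2*mu) * ‖gradient (fun z => v z p.2) p.1‖^2)
          {p : Eu N × ℝ | 0 ≤ p.2} :=
        hsol.contu.add (continuousOn_const.mul ((hgvcont.norm).pow 2))
      exact (Continuous.continuousOn (by
        exact (Real.continuous_exp.comp (continuous_const.mul continuous_snd).neg))).mul
        (cw.sub cW.continuousOn)
    -- spatial regularity
    · intro s hs
      exact contDiff_const.mul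
        (((hsol.regu s hs).add (contDiff_const.mul
          (KS.contDiff_norm_grad_sq (hrv s hs)))).sub (KS.contDiff_Wf M k c ξ s))
    -- differential inequality
    · intro y s hs
      have hU : ContDiff ℝ 2 (fun z => u z s) := hsol.regu s hs
      have hV3 : ContDiff ℝ 3 (fun z => v z s) := hrv s hs
      have hV2 : ContDiff ℝ 2 (fun z => v z s) := hV3.of_le (by norm_num)
      -- gradient of time derivative, componentwise
      have hfunl : (fun z => deriv (fun τ => v z τ) s)
          = fun z => lap (fun y' => v y' s) z - lam * v z s + mu * u z s :=
        funext fun z => (hsol.pdev z s hs).deriv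
      have hhD : ∀ i : Fin N, gradient (fun z => deriv (fun τ => v z τ) s) y i
          = pd (fun z => lap (fun y' => v y' s) z) i y
            - lam * pd (fun z => v z s) i y + mu * pd (fun z => u z s) i y := by
        intro i
        rw [hfunl, KS.grad_apply,
          KS.pd_add (f := fun z => lap (fun y' => v y' s) z - lam * v z s) (g := fun z => mu * u z s) (((KS.diff_lap hV3) y).sub ((differentiable_const lam).mul
            (hV2.differentiable (by norm_num)) y))
            (((differentiable_const mu).mul (hU.differentiable (by norm_num))) y),
          KS.pd_sub (f := fun z => lap (fun y' => v y' s) z) (g := fun z => lam * v z s) ((KS.diff_lap hV3) y) (((differentiable_const lam).mul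
            (hV2.differentiable (by norm_num))) y),
          KS.pd_const_mul (hV2.differentiable (by norm_num) y) lam,
          KS.pd_const_mul (hU.differentiable (by norm_num) y) mu]
      -- inner product expansion
      have hinner : ⟪gradient (fun z => v z s) y,
          gradient (fun z => deriv (fun τ => v z τ) s) y⟫
          = ∑ i, pd (fun z => v z s) i y *
            (pd (fun z => lap (fun y' => v y' s) z) i y
              - lam * pd (fun z => v z s) i y + mu * pd (fun z => u z s) i y) := by
        rw [PiLp.inner_apply]
        refine Finset.sum_congr rfl fun i _ => ?_
        rw [RCLike.inner_apply, hhD i, KS.grad_apply]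
        simp
        ring
      -- time derivative of the norm-squared term
      have hGd := hgv y s hs
      have hIP := HasDerivAt.inner (𝕜 := ℝ) hGd hGd
      have hnorm : HasDerivAt (fun τ => ‖gradient (fun z => v z τ) y‖^2)
          (2 * ⟪gradient (fun z => v z s) y,
            gradient (fun z => deriv (fun τ => v z τ) s) y⟫) s := by
        have heq : (fun τ => (⟪gradient (fun z => v z τ) y,
            gradient (fun z => v z τ) y⟫ : ℝ))
            = fun τ => ‖gradient (fun z => v z τ) y‖^2 :=
          funext fun τ => real_inner_self_eq_norm_sq _
        rw [heq] at hIP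
        exact hIP.congr_deriv (by rw [real_inner_comm]; ring)
      have hwD := (hsol.pdeu y s hs).add (hnorm.const_mul (χ/(2*mu)))
      have hWD := KS.hasDerivAt_Wf M k c ξ y s
      have hED : HasDerivAt (fun τ : ℝ => Real.exp (-(a*τ))) (-a * Real.exp (-(a*s))) s := by
        have h := (((hasDerivAt_id s).const_mul a).neg).exp
        simpa [mul_comm] using h
      have hZD := hED.mul (hwD.sub hWD)
      refine ⟨_, hZD, ?_⟩
      have hWC2 : ContDiff ℝ 2 (fun z => KS.Wf M k c ξ z s) := KS.contDiff_Wf M k c ξ s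
      have hwC2 : ContDiff ℝ 2
          (fun z => u z s + χ/(2*mu) * ‖gradient (fun z' => v z' s) z‖^2) :=
        hU.add (contDiff_const.mul (KS.contDiff_norm_grad_sq hV3))
      have hlapZ : lap (fun z => Real.exp (-(a*s)) *
          ((u z s + χ/(2*mu) * ‖gradient (fun z' => v z' s) z‖^2) - KS.Wf M k c ξ z s)) y
          = Real.exp (-(a*s)) * ((lap (fun z => u z s) y
              + χ/(2*mu) * lap (fun z => ‖gradient (fun z' => v z' s) z‖^2) y)
            - k^2 * KS.Wf M k c ξ y s) := by
        rw [KS.lap_const_mul (hwC2.sub hWC2) _ y, KS.lap_sub hwC2 hWC2 y,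
          KS.lap_add hU (contDiff_const.mul (KS.contDiff_norm_grad_sq hV3)) y,
          KS.lap_const_mul (KS.contDiff_norm_grad_sq hV3) _ y, KS.lap_Wf M k c ξ hξ s y]
      rw [hlapZ]
      simp only [Pi.add_apply, Pi.sub_apply]
      have hkey := KS.key_ineq hN hχ ha hmu hlam hcond (fun z => u z s) (fun z => v z s)
        hU hV3 y (hnn y s hs.le).1
      rw [← hinner] at hkey
      have hhalf : χ/(2*mu) * (2 * ⟪gradient (fun z => v z s) y,
          gradient (fun z => deriv (fun τ => v z τ) s) y⟫)
          = χ/mu * ⟪gradient (fun z => v z s) y,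
          gradient (fun z => deriv (fun τ => v z τ) s) y⟫ := by
        field_simp
      have hkcW : k * c * (Real.exp (-(a*s)) * KS.Wf M k c ξ y s)
          = (k^2 + a) * (Real.exp (-(a*s)) * KS.Wf M k c ξ y s) := by rw [hkc]
      nlinarith [mul_le_mul_of_nonneg_left hkey (Real.exp_pos (-(a*s))).le, hkcW, hhalf,
        Real.exp_pos (-(a*s))]
    -- boundedness
    · intro T hT
      obtain ⟨C, hC⟩ := hwbd T hT
      refine ⟨C, fun y s h1 h2 => ?_⟩
      have h3 := hC y s h1 h2
      have habs := abs_le.1 h3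
      have hC0 : 0 ≤ C := (abs_nonneg _).trans h3
      have hWpos : 0 < KS.Wf M k c ξ y s := mul_pos hM (Real.exp_pos _)
      have hexp1 : Real.exp (-(a*s)) ≤ 1 := by
        rw [Real.exp_le_one_iff]
        nlinarith
      have hexp0 : 0 < Real.exp (-(a*s)) := Real.exp_pos _
      nlinarith [mul_nonneg hexp0.le (sub_nonneg.2 habs.2),
        mul_pos hexp0 hWpos, mul_nonneg (sub_nonneg.2 hexp1) hC0]
    -- initial data
    · intro y
      have h1 : gradient (fun z => v z 0) y = gradient v₀ y := hgv0 y
      have h2 : KS.Wf M k c ξ y 0 = M * Real.exp (-k * ⟪y, ξ⟫) := by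
        show M * Real.exp (-k * (⟪y, ξ⟫ - c * 0)) = _
        norm_num
      have h3 : u y 0 + χ/(2*mu) * ‖gradient (fun z => v z 0) y‖^2
          - KS.Wf M k c ξ y 0 ≤ 0 := by
        rw [h1, h2, hsol.initu y]
        have := hinit y
        linarith
      nlinarith [Real.exp_pos (-(a*(0:ℝ))), h3]
  -- conclusion
  intro x t ht
  have h1 := hZ0 x t ht.le
  have hexp0 : 0 < Real.exp (-(a*t)) := Real.exp_pos _
  have h2 : u x t + χ/(2*mu) * ‖gradient (fun z => v z t) x‖^2 ≤ KS.Wf M k c ξ x t := by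
    nlinarith
  have h3 : 0 ≤ χ/(2*mu) * ‖gradient (fun z => v z t) x‖^2 :=
    mul_nonneg (div_nonneg hχ.le hmu2.le) (sq_nonneg _)
  have h4 : KS.Wf M k c ξ x t = M * Real.exp (-k * (⟪x, ξ⟫ - c * t)) := rfl
  linarith [h4 ▸ h2]
end
end

section
/- Suppose b > Nμχ/4. Let u₀ ∈ X₁⁺, v₀ ∈ X₂⁺, and let (u, v) be a bounded nonnegative global classical solution of (KS) with initial data (u₀, v₀). Let 0 < k < √a, set c = (k² + a)/k, and let ξ ∈ S^{N−1} and M > 0 be such that u(x,t) ≤ M e^{−k(x·ξ − c t)} for all x ∈ ℝ^N and t ≥ 0. If d ≥ μM/(a + λ) and v₀(x) ≤ d e^{−k x·ξ} for all x ∈ ℝ^N, then v(x,t) ≤ d e^{−k(x·ξ − c t)} for all x ∈ ℝ^N and t > 0. -/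
open Real Filter MeasureTheory RealInnerProductSpace

noncomputable section

/-! ### Auxiliary lemmas -/

/-- At a maximum over `[0,t₀]` with `t₀ > 0`, the derivative is nonnegative. -/
lemma nonneg_deriv_of_max {g : ℝ → ℝ} {t₀ m : ℝ} (ht : 0 < t₀)
    (hg : HasDerivAt g m t₀) (hmax : ∀ s ∈ Set.Icc (0:ℝ) t₀, g s ≤ g t₀) : 0 ≤ m := by
  have h := hasDerivAt_iff_tendsto_slope.1 hg
  have hmono : nhdsWithin t₀ (Set.Ioo 0 t₀) ≤ nhdsWithin t₀ {t₀}ᶜ :=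
    nhdsWithin_mono _ (fun s hs => ne_of_lt hs.2)
  have hne : (nhdsWithin t₀ (Set.Ioo 0 t₀)).NeBot := by
    apply mem_closure_iff_nhdsWithin_neBot.1
    rw [closure_Ioo (ne_of_lt ht)]
    exact Set.right_mem_Icc.2 ht.le
  refine ge_of_tendsto (h.mono_left hmono) ?_
  filter_upwards [self_mem_nhdsWithin] with s hs
  rw [slope_def_field]
  exact div_nonneg_iff.2 (Or.inr ⟨by linarith [hmax s ⟨hs.1.le, hs.2.le⟩], by linarith [hs.2]⟩)

/-- Second derivative test in one dimension. -/
lemma second_deriv_test {g g' : ℝ → ℝ} {m : ℝ}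
    (hd : ∀ s, HasDerivAt g (g' s) s)
    (hd2 : HasDerivAt g' m 0)
    (hmax : IsLocalMax g 0) : m ≤ 0 := by
  by_contra h
  push_neg at h
  have h0 : g' 0 = 0 := by
    have h1 := hmax.deriv_eq_zero
    rwa [(hd 0).deriv] at h1
  have hslope := hasDerivAt_iff_tendsto_slope.1 hd2
  have hpos : ∀ᶠ s in nhdsWithin 0 (Set.Ioi 0), 0 < g' s := by
    have h2 : Tendsto (slope g' 0) (nhdsWithin 0 (Set.Ioi 0)) (nhds m) :=
      hslope.mono_left (nhdsWithin_mono _ (fun s hs => ne_of_gt hs))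
    have h3 : ∀ᶠ s in nhdsWithin 0 (Set.Ioi 0), 0 < slope g' 0 s :=
      h2.eventually (eventually_gt_nhds h)
    filter_upwards [h3, self_mem_nhdsWithin] with s hs hs'
    rw [slope_def_field, h0] at hs
    have := mul_pos hs (show (0:ℝ) < s - 0 from by simpa using hs')
    rw [div_mul_cancel₀] at this
    · simpa using this
    · simpa using ne_of_gt hs'
  obtain ⟨δ, hδ, hδpos⟩ :=
    (nhdsGT_basis_of_exists_gt (⟨1, by norm_num⟩ : ∃ b, (0:ℝ) < b)).eventually_iff.1 hpos
  have hsm : StrictMonoOn g (Set.Icc 0 δ) := by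
    apply strictMonoOn_of_deriv_pos (convex_Icc _ _)
    · exact fun s _ => (hd s).continuousAt.continuousWithinAt
    · intro s hs
      rw [interior_Icc] at hs
      rw [(hd s).deriv]
      exact hδpos ⟨hs.1, hs.2⟩
  have hev : ∀ᶠ s in nhdsWithin 0 (Set.Ioi 0), g s ≤ g 0 :=
    (hmax.filter_mono nhdsWithin_le_nhds)
  have hev2 : ∀ᶠ s in nhdsWithin (0:ℝ) (Set.Ioi 0), s < δ :=
    eventually_nhdsWithin_of_eventually_nhds (eventually_lt_nhds hδ)
  obtain ⟨s, hle, hlt, hs⟩ := (hev.and (hev2.and self_mem_nhdsWithin)).exists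
  have := hsm ⟨le_refl 0, hδ.le⟩ ⟨le_of_lt hs, hlt.le⟩ hs
  linarith

/-- `pd f i` is differentiable for `C²` functions. -/
lemma pd_differentiable {N : ℕ} {f : Eu N → ℝ} (hf : ContDiff ℝ 2 f) (i : Fin N) :
    Differentiable ℝ (pd f i) := by
  have h1 : ContDiff ℝ 1 (fderiv ℝ f) := hf.fderiv_right (by norm_num)
  have : pd f i = fun x =>
      (ContinuousLinearMap.apply ℝ ℝ (EuclideanSpace.single i (1:ℝ))) (fderiv ℝ f x) := rfl
  rw [this]
  exact ((ContinuousLinearMap.apply ℝ ℝ _).contDiff.comp h1).differentiable one_ne_zero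

lemma pd_hasFDerivAt {N : ℕ} {f : Eu N → ℝ} (hf : ContDiff ℝ 2 f) (i : Fin N) (x : Eu N) :
    HasFDerivAt (pd f i) (fderiv ℝ (pd f i) x) x :=
  (pd_differentiable hf i x).hasFDerivAt

/-- Second-order derivative test at an interior local maximum. -/
lemma pd2_nonpos_of_isLocalMax {N : ℕ} {f : Eu N → ℝ} (hf : ContDiff ℝ 2 f) {x₀ : Eu N}
    (hmax : IsLocalMax f x₀) (i : Fin N) : pd2 f i i x₀ ≤ 0 := by
  set e : Eu N := EuclideanSpace.single i (1:ℝ) with he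
  set line : ℝ → Eu N := fun s => x₀ + s • e with hline
  have hlineD : ∀ s : ℝ, HasDerivAt line e s := by
    intro s
    simpa [hline] using ((hasDerivAt_id s).smul_const e).const_add x₀
  have hlineC : Continuous line := by fun_prop
  have hg : ∀ s, HasDerivAt (f ∘ line) (pd f i (line s)) s := fun s =>
    ((hf.differentiable (by norm_num) (line s)).hasFDerivAt).comp_hasDerivAt s (hlineD s)
  have hg2 : HasDerivAt (fun s => pd f i (line s)) (pd2 f i i x₀) 0 := by
    have h := (pd_hasFDerivAt hf i (line 0)).comp_hasDerivAt 0 (hlineD 0)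
    have h0 : line 0 = x₀ := by simp [hline]
    rw [h0] at h
    exact h
  have hmax' : IsLocalMax (f ∘ line) 0 := by
    have h0 : line 0 = x₀ := by simp [hline]
    exact (h0 ▸ hmax).comp_continuous hlineC.continuousAt
  exact second_deriv_test hg hg2 hmax'

lemma inner_hasFDerivAt {N : ℕ} (ξ x : Eu N) :
    HasFDerivAt (fun y : Eu N => ⟪y, ξ⟫) (innerSL ℝ ξ) x := by
  have : (fun y : Eu N => ⟪y, ξ⟫) = fun y => (innerSL ℝ ξ) y := by
    ext y; exact real_inner_comm _ _
  rw [this]; exact (innerSL ℝ ξ).hasFDerivAt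

lemma innerSL_single {N : ℕ} (ξ : Eu N) (i : Fin N) :
    (innerSL ℝ ξ) (EuclideanSpace.single i (1:ℝ)) = ξ i := by
  simp [EuclideanSpace.inner_single_right]

lemma expfun_hasFDerivAt {N : ℕ} (ξ : Eu N) (k β dd : ℝ) (x : Eu N) :
    HasFDerivAt (fun y : Eu N => dd * Real.exp (-k * (⟪y, ξ⟫ - β)))
      ((dd * Real.exp (-k * (⟪x, ξ⟫ - β)) * -k) • (innerSL ℝ ξ)) x := by
  have h1 := (((inner_hasFDerivAt ξ x).sub_const β).const_mul (-k)).exp.const_mul dd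
  refine h1.congr_fderiv ?_
  ext y
  simp [ContinuousLinearMap.smul_apply]
  ring

lemma expfun_contDiff {N : ℕ} (ξ : Eu N) (k β dd : ℝ) :
    ContDiff ℝ 2 (fun y : Eu N => dd * Real.exp (-k * (⟪y, ξ⟫ - β))) := by
  have hin : ContDiff ℝ 2 (fun y : Eu N => ⟪y, ξ⟫) := by
    have : (fun y : Eu N => ⟪y, ξ⟫) = fun y => (innerSL ℝ ξ) y := by
      ext y; exact real_inner_comm _ _
    rw [this]; exact (innerSL ℝ ξ).contDiff
  exact contDiff_const.mul (Real.contDiff_exp.comp (contDiff_const.mul (hin.sub contDiff_const)))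

lemma expfun_pd {N : ℕ} (ξ : Eu N) (k β dd : ℝ) (i : Fin N) (x : Eu N) :
    pd (fun y : Eu N => dd * Real.exp (-k * (⟪y, ξ⟫ - β))) i x
      = -k * ξ i * (dd * Real.exp (-k * (⟪x, ξ⟫ - β))) := by
  unfold pd
  rw [(expfun_hasFDerivAt ξ k β dd x).fderiv]
  simp [innerSL_single]
  ring

lemma expfun_pd2 {N : ℕ} (ξ : Eu N) (k β dd : ℝ) (i : Fin N) (x : Eu N) :
    pd2 (fun y : Eu N => dd * Real.exp (-k * (⟪y, ξ⟫ - β))) i i x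
      = k ^ 2 * ξ i ^ 2 * (dd * Real.exp (-k * (⟪x, ξ⟫ - β))) := by
  unfold pd2
  have h : (fun y => pd (fun y : Eu N => dd * Real.exp (-k * (⟪y, ξ⟫ - β))) i y)
      = fun y : Eu N => (-k * ξ i * dd) * Real.exp (-k * (⟪y, ξ⟫ - β)) := by
    ext y; rw [expfun_pd]; ring
  rw [h]
  have := expfun_pd ξ k β (-k * ξ i * dd) i x
  unfold pd at this ⊢
  rw [this]
  ring

lemma expfun_lap {N : ℕ} (ξ : Eu N) (hξ : ‖ξ‖ = 1) (k β dd : ℝ) (x : Eu N) :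
    lap (fun y : Eu N => dd * Real.exp (-k * (⟪y, ξ⟫ - β))) x
      = k ^ 2 * (dd * Real.exp (-k * (⟪x, ξ⟫ - β))) := by
  unfold lap
  simp only [expfun_pd2]
  rw [← Finset.sum_mul]
  have hsum : ∑ i, k ^ 2 * ξ i ^ 2 = k ^ 2 := by
    rw [← Finset.mul_sum]
    have : ∑ i, ξ i ^ 2 = 1 := by
      have h1 : ⟪ξ, ξ⟫ = ‖ξ‖ ^ 2 := real_inner_self_eq_norm_sq ξ
      rw [hξ] at h1
      rw [PiLp.inner_apply] at h1
      simp only [RCLike.inner_apply, starRingEnd_apply, star_trivial] at h1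
      calc ∑ i, ξ i ^ 2 = ∑ i, ξ i * ξ i := by simp [sq]
        _ = 1 := by rw [h1]; norm_num
    rw [this, mul_one]
  rw [hsum]

/-- The quadratic auxiliary function `ψ(x) = ⟪x,x⟫ = ‖x‖²`. -/
def psi {N : ℕ} (x : Eu N) : ℝ := ⟪x, x⟫

lemma psi_contDiff {N : ℕ} : ContDiff ℝ 2 (psi (N := N)) :=
  ContDiff.inner ℝ contDiff_id contDiff_id

lemma psi_nonneg {N : ℕ} (x : Eu N) : 0 ≤ psi x := real_inner_self_nonneg

lemma psi_eq_norm {N : ℕ} (x : Eu N) : psi x = ‖x‖ ^ 2 := real_inner_self_eq_norm_sq x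

lemma psi_pd {N : ℕ} (i : Fin N) (x : Eu N) : pd psi i x = 2 * x i := by
  unfold pd psi
  have h := (hasFDerivAt_id x).inner ℝ (hasFDerivAt_id x)
  simp only [id_eq] at h
  rw [h.fderiv]
  simp [fderivInnerCLM_apply, EuclideanSpace.inner_single_right,
    EuclideanSpace.inner_single_left]
  ring

lemma psi_pd2 {N : ℕ} (i : Fin N) (x : Eu N) : pd2 psi i i x = 2 := by
  unfold pd2
  have h : (fun y => pd (psi (N := N)) i y)
      = fun y : Eu N => 2 * (EuclideanSpace.proj (𝕜 := ℝ) i) y := by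
    ext y; rw [psi_pd]; simp
  rw [h]
  unfold pd
  rw [(((EuclideanSpace.proj (𝕜 := ℝ) i).hasFDerivAt (x := x)).const_mul 2).fderiv]
  simp

lemma psi_lap {N : ℕ} (x : Eu N) : lap psi x = 2 * N := by
  unfold lap
  simp [psi_pd2]; ring

lemma pd_sub_combo {N : ℕ} {V P Ψ : Eu N → ℝ} (hV : ContDiff ℝ 2 V) (hP : ContDiff ℝ 2 P)
    (hΨ : ContDiff ℝ 2 Ψ) (ε C0 : ℝ) (j : Fin N) (y : Eu N) :
    pd (fun z => V z - P z - ε * Ψ z - C0) j y = pd V j y - pd P j y - ε * pd Ψ j y := by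
  have h1 : HasFDerivAt (fun z => V z - P z - ε * Ψ z - C0)
      (fderiv ℝ V y - fderiv ℝ P y - ε • fderiv ℝ Ψ y) y :=
    (((hV.differentiable (by norm_num) y).hasFDerivAt.sub
      (hP.differentiable (by norm_num) y).hasFDerivAt).sub
      ((hΨ.differentiable (by norm_num) y).hasFDerivAt.const_mul ε)).sub_const C0
  unfold pd
  rw [h1.fderiv]
  simp

lemma pd2_sub_combo {N : ℕ} {V P Ψ : Eu N → ℝ} (hV : ContDiff ℝ 2 V) (hP : ContDiff ℝ 2 P)
    (hΨ : ContDiff ℝ 2 Ψ) (ε C0 : ℝ) (i : Fin N) (x : Eu N) :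
    pd2 (fun z => V z - P z - ε * Ψ z - C0) i i x
      = pd2 V i i x - pd2 P i i x - ε * pd2 Ψ i i x := by
  unfold pd2
  have h : (fun y => pd (fun z => V z - P z - ε * Ψ z - C0) i y)
      = fun y => pd V i y - pd P i y - ε * pd Ψ i y :=
    funext (pd_sub_combo hV hP hΨ ε C0 i)
  rw [h]
  have h1 : HasFDerivAt (fun y => pd V i y - pd P i y - ε * pd Ψ i y)
      (fderiv ℝ (pd V i) x - fderiv ℝ (pd P i) x - ε • fderiv ℝ (pd Ψ i) x) x :=
    ((pd_differentiable hV i x).hasFDerivAt.sub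
      (pd_differentiable hP i x).hasFDerivAt).sub
      ((pd_differentiable hΨ i x).hasFDerivAt.const_mul ε)
  unfold pd at h1 ⊢
  rw [h1.fderiv]
  simp

lemma lap_sub_combo {N : ℕ} {V P Ψ : Eu N → ℝ} (hV : ContDiff ℝ 2 V) (hP : ContDiff ℝ 2 P)
    (hΨ : ContDiff ℝ 2 Ψ) (ε C0 : ℝ) (x : Eu N) :
    lap (fun z => V z - P z - ε * Ψ z - C0) x = lap V x - lap P x - ε * lap Ψ x := by
  unfold lap
  simp only [pd2_sub_combo hV hP hΨ ε C0]
  rw [Finset.sum_sub_distrib, Finset.sum_sub_distrib, Finset.mul_sum]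

/-- exponential upper bound for `v` by comparison: if
`u(x,t) ≤ M e^{-k(x·ξ-ct)}`, `d ≥ μM/(a+λ)` and `v₀ ≤ d e^{-k x·ξ}`, then
`v(x,t) ≤ d e^{-k(x·ξ-ct)}` with `c = (k²+a)/k`. -/
theorem statement16 (N : ℕ) (hN : 1 ≤ N) (χ a b lam mu : ℝ)
    (hχ : 0 < χ) (ha : 0 < a) (hb : 0 < b) (hlam : 0 < lam) (hmu : 0 < mu)
    (hcond : b > N * mu * χ / 4)
    (u₀ v₀ : Eu N → ℝ) (hu₀ : MemX1plus u₀) (hv₀ : MemX2plus v₀)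
    (u v : Eu N → ℝ → ℝ)
    (hsol : IsClassicalSolution χ a b lam mu u v u₀ v₀)
    (hbd : BoundedSol u v) (hnn : NonnegSol u v)
    (k c : ℝ) (hk : 0 < k) (hk' : k < Real.sqrt a) (hc : c = (k ^ 2 + a) / k)
    (ξ : Eu N) (hξ : ‖ξ‖ = 1) (M : ℝ) (hM : 0 < M)
    (hu : ∀ (x : Eu N) (t : ℝ), 0 ≤ t →
      u x t ≤ M * Real.exp (-k * (⟪x, ξ⟫ - c * t)))
    (d : ℝ) (hd : mu * M / (a + lam) ≤ d)
    (hv0 : ∀ x : Eu N, v₀ x ≤ d * Real.exp (-k * ⟪x, ξ⟫)) :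
    ∀ (x : Eu N) (t : ℝ), 0 < t →
      v x t ≤ d * Real.exp (-k * (⟪x, ξ⟫ - c * t)) := by
  intro xb tb htb
  obtain ⟨C, hC⟩ := hbd
  have hC0 : 0 ≤ C := le_trans (abs_nonneg _) (hC xb 0 le_rfl).1
  have halam : 0 < a + lam := by linarith
  have hd0 : 0 < d := lt_of_lt_of_le (div_pos (mul_pos hmu hM) halam) hd
  have hkey : mu * M ≤ d * (a + lam) := by
    rw [div_le_iff₀ halam] at hd; linarith
  have hkc : k * c = k ^ 2 + a := by
    rw [hc]; field_simp
  have hN1 : (1:ℝ) ≤ (N:ℝ) := by exact_mod_cast hN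
  -- Main claim: for every ε > 0 the perturbed comparison holds on the slab [0, tb]
  have main : ∀ ε : ℝ, 0 < ε → ∀ (x : Eu N) (t : ℝ), 0 ≤ t → t ≤ tb →
      v x t - d * Real.exp (-k * (⟪x, ξ⟫ - c * t)) ≤ ε * (psi x + 2 * N * t) := by
    intro ε hε x' t' ht'0 ht'T
    by_contra hcon
    push_neg at hcon
    set Z : Eu N × ℝ → ℝ := fun p =>
      v p.1 p.2 - d * Real.exp (-k * (⟪p.1, ξ⟫ - c * p.2)) - ε * (psi p.1 + 2 * N * p.2)
      with hZdef
    have hZp : 0 < Z (x', t') := by simp only [hZdef]; linarith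
    obtain ⟨R, hRx', hRs⟩ : ∃ R : ℝ, ‖x'‖ ≤ R ∧ Real.sqrt (C / ε) < R :=
      ⟨max ‖x'‖ (Real.sqrt (C / ε)) + 1,
        by have := le_max_left ‖x'‖ (Real.sqrt (C / ε)); linarith,
        by have := le_max_right ‖x'‖ (Real.sqrt (C / ε)); linarith⟩
    set K : Set (Eu N × ℝ) := Metric.closedBall 0 R ×ˢ Set.Icc 0 tb with hKdef
    have hKsub : K ⊆ {p : Eu N × ℝ | 0 ≤ p.2} := fun p hp => hp.2.1
    have hKc : IsCompact K := (isCompact_closedBall _ _).prod isCompact_Icc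
    have hpK : (x', t') ∈ K := by
      refine ⟨?_, ht'0, ht'T⟩
      rw [Metric.mem_closedBall, dist_zero_right]; exact hRx'
    have hZcont : ContinuousOn Z K := by
      have hc1 : ContinuousOn (fun p : Eu N × ℝ => v p.1 p.2) K := hsol.contv.mono hKsub
      have hin : Continuous (fun p : Eu N × ℝ => (⟪p.1, ξ⟫ : ℝ)) :=
        continuous_fst.inner continuous_const
      have hc2 : Continuous (fun p : Eu N × ℝ =>
          d * Real.exp (-k * (⟪p.1, ξ⟫ - c * p.2))) :=
        continuous_const.mul (Real.continuous_exp.comp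
          (continuous_const.mul (hin.sub (continuous_const.mul continuous_snd))))
      have hc3 : Continuous (fun p : Eu N × ℝ => ε * (psi p.1 + 2 * N * p.2)) :=
        continuous_const.mul ((psi_contDiff.continuous.comp continuous_fst).add
          (continuous_const.mul continuous_snd))
      exact (hc1.sub hc2.continuousOn).sub hc3.continuousOn
    obtain ⟨p₀, hp₀K, hp₀max⟩ := hKc.exists_isMaxOn ⟨_, hpK⟩ hZcont
    obtain ⟨x₀, t₀⟩ := p₀
    have hZ0pos : 0 < Z (x₀, t₀) := lt_of_lt_of_le hZp (hp₀max hpK)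
    have hx₀R : ‖x₀‖ ≤ R := by
      have := hp₀K.1; rwa [Metric.mem_closedBall, dist_zero_right] at this
    have ht₀0 : 0 ≤ t₀ := hp₀K.2.1
    have ht₀T : t₀ ≤ tb := hp₀K.2.2
    set E : ℝ := Real.exp (-k * (⟪x₀, ξ⟫ - c * t₀)) with hEdef
    have hE : 0 < E := Real.exp_pos _
    have hZ0eq : Z (x₀, t₀) = v x₀ t₀ - d * E - ε * (psi x₀ + 2 * N * t₀) := rfl
    -- t₀ > 0
    have ht₀pos : 0 < t₀ := by
      rcases eq_or_lt_of_le ht₀0 with h0 | h0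
      · exfalso
        have hv00 : v x₀ 0 = v₀ x₀ := hsol.initv x₀
        have hb0 : v₀ x₀ ≤ d * Real.exp (-k * ⟪x₀, ξ⟫) := hv0 x₀
        have hE0 : Real.exp (-k * (⟪x₀, ξ⟫ - c * 0)) = Real.exp (-k * ⟪x₀, ξ⟫) := by
          norm_num
        have hZ00 : Z (x₀, 0) = v x₀ 0 - d * Real.exp (-k * ⟪x₀, ξ⟫)
            - ε * (psi x₀ + 2 * N * 0) := by
          simp only [hZdef, hE0]
        have hpsi := psi_nonneg x₀
        rw [← h0] at hZ0pos
        rw [hZ00, hv00] at hZ0pos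
        have h5' : 0 ≤ ε * psi x₀ := mul_nonneg hε.le hpsi
        nlinarith
      · exact h0
    -- strict interior in space
    have hx₀lt : ‖x₀‖ < R := by
      have h1 : v x₀ t₀ ≤ C := le_trans (le_abs_self _) (hC x₀ t₀ ht₀0).2
      have h2 : ε * psi x₀ < C := by
        have h3 : 0 < d * E := mul_pos hd0 hE
        have h4 : 0 ≤ 2 * (N:ℝ) * t₀ := by positivity
        rw [hZ0eq] at hZ0pos
        have h4' : 0 ≤ ε * (2 * N * t₀) := mul_nonneg hε.le h4
        have h5' : 0 ≤ ε * psi x₀ := mul_nonneg hε.le (psi_nonneg x₀)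
        linarith
      have h5 : psi x₀ ≤ C / ε := le_of_lt ((lt_div_iff₀ hε).2 (by linarith))
      have h6 : ‖x₀‖ ≤ Real.sqrt (C / ε) := by
        rw [show ‖x₀‖ = Real.sqrt (‖x₀‖ ^ 2) from (Real.sqrt_sq (norm_nonneg _)).symm]
        exact Real.sqrt_le_sqrt (by rw [← psi_eq_norm]; exact h5)
      linarith
    -- time derivative at the maximum point is nonnegative
    set lapv : ℝ := lap (fun y => v y t₀) x₀ with hlapvdef
    have hder : HasDerivAt (fun s => Z (x₀, s))
        (lapv - lam * v x₀ t₀ + mu * u x₀ t₀ - d * E * (k * c) - ε * (2 * N)) t₀ := by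
      have h1 := hsol.pdev x₀ t₀ ht₀pos
      have h2 : HasDerivAt (fun s : ℝ => d * Real.exp (-k * (⟪x₀, ξ⟫ - c * s)))
          (d * E * (k * c)) t₀ := by
        have hid : HasDerivAt (fun s : ℝ => -k * (⟪x₀, ξ⟫ - c * s)) (k * c) t₀ := by
          have h := (((hasDerivAt_id t₀).const_mul c).const_sub (⟪x₀, ξ⟫ : ℝ)).const_mul (-k)
          exact h.congr_deriv (by ring)
        have h := (hid.exp).const_mul d
        exact h.congr_deriv (by rw [hEdef]; ring)
      have h3 : HasDerivAt (fun s : ℝ => ε * (psi x₀ + 2 * N * s)) (ε * (2 * N)) t₀ := by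
        have h := (((hasDerivAt_id t₀).const_mul (2 * (N:ℝ))).const_add (psi x₀)).const_mul ε
        exact h.congr_deriv (by ring)
      exact (h1.sub h2).sub h3
    have hm : 0 ≤ lapv - lam * v x₀ t₀ + mu * u x₀ t₀ - d * E * (k * c) - ε * (2 * N) := by
      refine nonneg_deriv_of_max ht₀pos hder ?_
      intro s hs
      exact hp₀max ⟨hp₀K.1, hs.1, le_trans hs.2 ht₀T⟩
    -- spatial second derivative test
    set f : Eu N → ℝ := fun y =>
      v y t₀ - d * Real.exp (-k * (⟪y, ξ⟫ - c * t₀)) - ε * psi y - ε * (2 * N * t₀)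
      with hfdef
    have hfZ : ∀ y, f y = Z (y, t₀) := by
      intro y; simp only [hfdef, hZdef]; ring
    have hf2 : ContDiff ℝ 2 f :=
      (((hsol.regv t₀ ht₀pos).sub (expfun_contDiff ξ k (c * t₀) d)).sub
        (contDiff_const.mul psi_contDiff)).sub contDiff_const
    have hlocmax : IsLocalMax f x₀ := by
      have hball : Metric.ball (0 : Eu N) R ∈ nhds x₀ :=
        Metric.isOpen_ball.mem_nhds (by rwa [Metric.mem_ball, dist_zero_right])
      filter_upwards [hball] with y hy
      rw [hfZ y, hfZ x₀]
      exact hp₀max ⟨Metric.ball_subset_closedBall hy, hp₀K.2⟩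
    have hlapf : lap f x₀ ≤ 0 :=
      Finset.sum_nonpos fun i _ => pd2_nonpos_of_isLocalMax hf2 hlocmax i
    have hlapeq : lap f x₀ = lapv - k ^ 2 * (d * E) - ε * (2 * N) := by
      have h := lap_sub_combo (hsol.regv t₀ ht₀pos) (expfun_contDiff ξ k (c * t₀) d)
        psi_contDiff ε (ε * (2 * N * t₀)) x₀
      rw [hfdef]
      rw [h, expfun_lap ξ hξ k (c * t₀) d x₀, psi_lap]
    -- final arithmetic contradiction
    have hulte : u x₀ t₀ ≤ M * E := hu x₀ t₀ ht₀0
    have hvgt : d * E < v x₀ t₀ := by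
      have hpsi := psi_nonneg x₀
      have h4 : 0 < 2 * (N:ℝ) * t₀ := by positivity
      rw [hZ0eq] at hZ0pos
      have h4' : 0 < ε * (2 * N * t₀) := by positivity
      have h5' : 0 ≤ ε * psi x₀ := mul_nonneg hε.le hpsi
      linarith
    have h9 : mu * u x₀ t₀ ≤ mu * (M * E) := mul_le_mul_of_nonneg_left hulte hmu.le
    have h10 : lam * (d * E) < lam * v x₀ t₀ := mul_lt_mul_of_pos_left hvgt hlam
    have h11 : E * (mu * M) ≤ E * (d * (a + lam)) := mul_le_mul_of_nonneg_left hkey hE.le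
    have h12 : lapv ≤ k ^ 2 * (d * E) + ε * (2 * N) := by
      rw [hlapeq] at hlapf; linarith
    have h13 : d * E * (k * c) = d * E * k ^ 2 + d * E * a := by rw [hkc]; ring
    linarith [hm, h12, h9, h10, h11, h13]
  -- pass to the limit ε → 0
  have hB : 0 < psi xb + 2 * N * tb := by
    have := psi_nonneg xb
    have h4 : 0 < 2 * (N:ℝ) * tb := by positivity
    linarith
  set A : ℝ := v xb tb - d * Real.exp (-k * (⟪xb, ξ⟫ - c * tb)) with hAdef
  have hA : A ≤ 0 := by
    by_contra hpos
    push_neg at hpos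
    have hB2 : (0:ℝ) < 2 * (psi xb + 2 * N * tb) := by linarith
    have h := main (A / (2 * (psi xb + 2 * N * tb))) (div_pos hpos hB2) xb tb htb.le le_rfl
    rw [← hAdef] at h
    have h2 : A / (2 * (psi xb + 2 * N * tb)) * (psi xb + 2 * N * tb) = A / 2 := by
      field_simp
    rw [h2] at h
    linarith
  rw [hAdef] at hA
  linarith
end
end
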